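/- arXiv:1203.3710 — 5 statements merged into one kernel-verified Lean document; each statement's English description precedes it below -/
import Mathlib

section
/- For every connected finite simple graph G with chromatic number χ(G), one has C(χ(G),2) − χ(G) ≤ |E(G)| − |V(G)|. -/
open SimpleGraph

/-- Simple-graph contraction identifying vertex `v` into vertex `u`
(the merged vertex is `u`; vertex `v` is removed). -/
def SimpleGraph.contractPair {V : Type*} (G : SimpleGraph V) (u v : V) :
    SimpleGraph {x : V // x ≠ v} where
  Adj x y := (x : V) ≠ (y : V) ∧
    (G.Adj x y ∨ ((x : V) = u ∧ G.Adj v y) ∨ ((y : V) = u ∧ G.Adj x v))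
  symm := by
    constructor
    rintro x y ⟨hne, h⟩
    refine ⟨hne.symm, ?_⟩
    rcases h with h | ⟨hx, hv⟩ | ⟨hy, hv⟩
    · exact Or.inl h.symm
    · exact Or.inr (Or.inr ⟨hx, hv.symm⟩)
    · exact Or.inr (Or.inl ⟨hy, hv.symm⟩)
  loopless := by constructor; rintro x ⟨h, -⟩; exact h rfl

/-- `H` is a minor of `G`: branch-set (model) definition. -/
def SimpleGraph.IsMinor {V W : Type*} (G : SimpleGraph V) (H : SimpleGraph W) : Prop :=
  ∃ f : W → Set V,
    (∀ w, (f w).Nonempty) ∧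
    (∀ w, (G.induce (f w)).Connected) ∧
    (∀ w w', w ≠ w' → Disjoint (f w) (f w')) ∧
    (∀ w w', H.Adj w w' → ∃ a ∈ f w, ∃ b ∈ f w', G.Adj a b)

/-- The Hadwiger number: the largest `t` with a `K_t` minor. -/
noncomputable def SimpleGraph.hadwigerNumber {V : Type*} (G : SimpleGraph V) : ℕ :=
  sSup {t | G.IsMinor (⊤ : SimpleGraph (Fin t))}

/-- `s` induces a cycle (of length ≥ 3) in `G`. -/
def SimpleGraph.IsInducedCycle {V : Type*} (G : SimpleGraph V) (s : Set V) : Prop :=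
  ∃ n, 3 ≤ n ∧ Nonempty ((G.induce s) ≃g SimpleGraph.cycleGraph n)

/-- The set of induced cycles of `G`, as vertex sets. -/
def SimpleGraph.inducedCycles {V : Type*} (G : SimpleGraph V) : Set (Set V) :=
  {s | G.IsInducedCycle s}


section CP
variable {V : Type*}

open Classical in
noncomputable def cpmap (u v : V) (hne : u ≠ v) (a : V) : {x : V // x ≠ v} :=
  if h : a = v then ⟨u, hne⟩ else ⟨a, h⟩

lemma cpmap_of_ne {u v : V} (hne : u ≠ v) {a : V} (h : a ≠ v) :
    cpmap u v hne a = ⟨a, h⟩ := by simp [cpmap, h]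

lemma cpmap_v {u v : V} (hne : u ≠ v) : cpmap u v hne v = ⟨u, hne⟩ := by simp [cpmap]

variable {G : SimpleGraph V} {u v : V}

lemma cpmap_adj (hne : u ≠ v) (huv : ¬ G.Adj u v) {a b : V} (hab : G.Adj a b) :
    (G.contractPair u v).Adj (cpmap u v hne a) (cpmap u v hne b) := by
  by_cases ha : a = v <;> by_cases hb : b = v
  · exact absurd (ha.trans hb.symm ▸ hab) (G.loopless.irrefl _)
  · have hbu : b ≠ u := fun h => huv (h ▸ ha ▸ hab).symm
    rw [ha, cpmap_v hne, cpmap_of_ne hne hb]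
    exact ⟨fun h => hbu h.symm, Or.inr (Or.inl ⟨rfl, ha ▸ hab⟩)⟩
  · have hau : a ≠ u := fun h => huv (h ▸ hb ▸ hab)
    rw [hb, cpmap_v hne, cpmap_of_ne hne ha]
    exact ⟨hau, Or.inr (Or.inr ⟨rfl, hb ▸ hab⟩)⟩
  · rw [cpmap_of_ne hne ha, cpmap_of_ne hne hb]
    exact ⟨hab.ne, Or.inl hab⟩

noncomputable def cphom (hne : u ≠ v) (huv : ¬ G.Adj u v) : G →g (G.contractPair u v) where
  toFun := cpmap u v hne
  map_rel' := cpmap_adj hne huv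

lemma cp_connected (hne : u ≠ v) (huv : ¬ G.Adj u v) (hconn : G.Connected) :
    (G.contractPair u v).Connected := by
  haveI : Nonempty {x : V // x ≠ v} := ⟨⟨u, hne⟩⟩
  refine ⟨fun x y => ?_⟩
  have := (hconn x.1 y.1).map (cphom hne huv)
  have hx : (cphom hne huv) x.1 = x := cpmap_of_ne hne x.2
  have hy : (cphom (G:=G) hne huv) y.1 = y := cpmap_of_ne hne y.2
  rwa [hx, hy] at this

lemma cp_chromaticNumber_le (hne : u ≠ v) (huv : ¬ G.Adj u v) :
    G.chromaticNumber ≤ (G.contractPair u v).chromaticNumber := by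
  refine chromaticNumber_le_of_forall_imp (fun n h => ?_)
  obtain ⟨C⟩ := h
  exact ⟨Coloring.mk (fun a => C (cpmap u v hne a))
    (fun hab => C.valid (cpmap_adj hne huv hab))⟩

end CP

section Edges
variable {V : Type*} {G : SimpleGraph V} {u v w : V}

open Classical in
noncomputable def cpemap (G : SimpleGraph V) (u v : V) : Sym2 {x : V // x ≠ v} → Sym2 V :=
  Sym2.lift ⟨fun x y =>
    if G.Adj x.1 y.1 then s(x.1, y.1)
    else if x.1 = u then s(v, y.1)
    else if y.1 = u then s(x.1, v)
    else s(x.1, y.1), by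
    intro x y
    by_cases h : G.Adj x.1 y.1
    · simp [h, h.symm, Sym2.eq_swap]
    · have h' : ¬ G.Adj y.1 x.1 := fun hh => h hh.symm
      by_cases hx : x.1 = u <;> by_cases hy : y.1 = u
      · have hxy : x = y := Subtype.ext (hx.trans hy.symm); subst hxy; rfl
      · simp [h, h', hx, hy, Sym2.eq_swap, adj_comm]
      · simp [h, h', hx, hy, Sym2.eq_swap, adj_comm]
      · simp [h, h', hx, hy, Sym2.eq_swap]⟩

lemma cpemap_spec {x y : {a : V // a ≠ v}} (hadj : (G.contractPair u v).Adj x y) :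
    (G.Adj x.1 y.1 ∧ cpemap G u v s(x, y) = s(x.1, y.1)) ∨
    (x.1 = u ∧ G.Adj v y.1 ∧ ¬ G.Adj u y.1 ∧ cpemap G u v s(x, y) = s(v, y.1)) ∨
    (y.1 = u ∧ G.Adj x.1 v ∧ ¬ G.Adj x.1 u ∧ cpemap G u v s(x, y) = s(x.1, v)) := by
  classical
  obtain ⟨hxy, hor⟩ := hadj
  by_cases h : G.Adj x.1 y.1
  · exact Or.inl ⟨h, by simp [cpemap, h]⟩
  · rcases hor with h' | ⟨hx, hv⟩ | ⟨hy, hv⟩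
    · exact absurd h' h
    · have h2 : ¬ G.Adj u y.1 := hx ▸ h
      exact Or.inr (Or.inl ⟨hx, hv, h2, by simp [cpemap, hx, h2]⟩)
    · have hxu : x.1 ≠ u := fun hh => hxy (hh.trans hy.symm)
      have h2 : ¬ G.Adj x.1 u := hy ▸ h
      exact Or.inr (Or.inr ⟨hy, hv, h2, by simp [cpemap, hy, h2, hxu]⟩)

lemma cpemap_mem (hw1 : G.Adj u w) (hw2 : G.Adj v w) :
    ∀ e ∈ (G.contractPair u v).edgeSet, cpemap G u v e ∈ G.edgeSet \ {s(v, w)} := by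
  intro e he
  induction e using Sym2.ind with
  | _ x y =>
    rw [SimpleGraph.mem_edgeSet] at he
    rcases cpemap_spec he with ⟨h, hF⟩ | ⟨hx, hv, hnadj, hF⟩ | ⟨hy, hv, hnadj, hF⟩
    · refine ⟨by simpa [hF] using h, ?_⟩
      simp only [Set.mem_singleton_iff, hF, Sym2.eq_iff]
      rintro (⟨h1, -⟩ | ⟨-, h2⟩)
      · exact x.2 h1
      · exact y.2 h2
    · refine ⟨by simpa [hF] using hv, ?_⟩
      simp only [Set.mem_singleton_iff, hF, Sym2.eq_iff]
      rintro (⟨-, h2⟩ | ⟨-, h2⟩)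
      · exact hnadj (h2 ▸ hw1)
      · exact y.2 h2
    · refine ⟨by simpa [hF] using hv, ?_⟩
      simp only [Set.mem_singleton_iff, hF, Sym2.eq_iff]
      rintro (⟨h1, -⟩ | ⟨h1, -⟩)
      · exact x.2 h1
      · exact hnadj (h1 ▸ hw1.symm)

lemma cpemap_injOn : Set.InjOn (cpemap G u v) (G.contractPair u v).edgeSet := by
  have key : ∀ (x y c d : {a : V // a ≠ v}), (G.contractPair u v).Adj x y →
      (G.contractPair u v).Adj c d → cpemap G u v s(x, y) = cpemap G u v s(c, d) →
      s(x, y) = s(c, d) := by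
    intro x y c d h1 h2 heq
    rcases cpemap_spec h1 with ⟨ha, hF⟩ | ⟨hx, hv, hnadj, hF⟩ | ⟨hy, hv, hnadj, hF⟩ <;>
      rcases cpemap_spec h2 with ⟨ha', hF'⟩ | ⟨hx', hv', hnadj', hF'⟩ | ⟨hy', hv', hnadj', hF'⟩ <;>
      rw [hF, hF'] at heq <;>
      rw [Sym2.eq_iff] at heq ⊢
    · rcases heq with ⟨e1, e2⟩ | ⟨e1, e2⟩
      · exact Or.inl ⟨Subtype.ext e1, Subtype.ext e2⟩
      · exact Or.inr ⟨Subtype.ext e1, Subtype.ext e2⟩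
    · rcases heq with ⟨e1, -⟩ | ⟨-, e2⟩
      · exact absurd e1 x.2
      · exact absurd e2 y.2
    · rcases heq with ⟨-, e2⟩ | ⟨e1, -⟩
      · exact absurd e2 y.2
      · exact absurd e1 x.2
    · rcases heq with ⟨e1, -⟩ | ⟨e1, -⟩
      · exact absurd e1.symm c.2
      · exact absurd e1.symm d.2
    · rcases heq with ⟨-, e2⟩ | ⟨e1, -⟩
      · exact Or.inl ⟨Subtype.ext (hx.trans hx'.symm), Subtype.ext e2⟩
      · exact absurd e1.symm d.2
    · rcases heq with ⟨e1, -⟩ | ⟨-, e2⟩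
      · exact absurd e1.symm c.2
      · exact Or.inr ⟨Subtype.ext (hx.trans hy'.symm), Subtype.ext e2⟩
    · rcases heq with ⟨-, e2⟩ | ⟨-, e2⟩
      · exact absurd e2.symm d.2
      · exact absurd e2.symm c.2
    · rcases heq with ⟨e1, -⟩ | ⟨e1, -⟩
      · exact absurd e1 x.2
      · exact Or.inr ⟨Subtype.ext e1, Subtype.ext (hy.trans hx'.symm)⟩
    · rcases heq with ⟨e1, -⟩ | ⟨e1, -⟩
      · exact Or.inl ⟨Subtype.ext e1, Subtype.ext (hy.trans hy'.symm)⟩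
      · exact absurd e1 x.2
  intro e1 he1 e2 he2 heq
  induction e1 using Sym2.ind with
  | _ x y =>
    induction e2 using Sym2.ind with
    | _ c d => exact key x y c d he1 he2 heq

lemma cp_edge_card [Fintype V] (hw1 : G.Adj u w) (hw2 : G.Adj v w) :
    (G.contractPair u v).edgeSet.ncard + 1 ≤ G.edgeSet.ncard := by
  classical
  have hfin : G.edgeSet.Finite := Set.toFinite _
  have hsub : cpemap G u v '' (G.contractPair u v).edgeSet ⊆ G.edgeSet \ {s(v, w)} := by
    rintro e ⟨e', he', rfl⟩
    exact cpemap_mem hw1 hw2 e' he'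
  have h1 : (G.contractPair u v).edgeSet.ncard = (cpemap G u v '' (G.contractPair u v).edgeSet).ncard :=
    (Set.ncard_image_of_injOn cpemap_injOn).symm
  have h2 : (cpemap G u v '' (G.contractPair u v).edgeSet).ncard ≤ (G.edgeSet \ {s(v, w)}).ncard :=
    Set.ncard_le_ncard hsub hfin.diff
  have h3 : (G.edgeSet \ {s(v, w)}).ncard + 1 = G.edgeSet.ncard :=
    Set.ncard_diff_singleton_add_one (G.mem_edgeSet.mpr hw2) hfin
  omega

end Edges

section MainAux
variable {V : Type*} {G : SimpleGraph V}

lemma exists_dist_two (hconn : G.Connected) (hnc : ¬ ∀ x y : V, x ≠ y → G.Adj x y) :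
    ∃ u v w : V, u ≠ v ∧ ¬ G.Adj u v ∧ G.Adj u w ∧ G.Adj v w := by
  push_neg at hnc
  obtain ⟨a0, b0, hab0, hn0⟩ := hnc
  set D := {d | ∃ a b : V, a ≠ b ∧ ¬ G.Adj a b ∧ G.dist a b = d} with hDdef
  have hD : D.Nonempty := ⟨_, a0, b0, hab0, hn0, rfl⟩
  obtain ⟨a, b, hab, hnadj, hd⟩ := Nat.sInf_mem hD
  have hpos : 0 < G.dist a b := hconn.pos_dist_of_ne hab
  obtain ⟨p, hp⟩ := hconn.exists_walk_length_eq_dist a b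
  cases p with
  | nil => exact absurd rfl hab
  | @cons _ c _ h q =>
    have hq : G.dist c b ≤ q.length := G.dist_le q
    have hlen : q.length + 1 = G.dist a b := by simpa using hp
    by_cases hadj : G.Adj c b
    · exact ⟨a, b, c, hab, hnadj, h, hadj.symm⟩
    · have htri : G.dist a b ≤ G.dist a c + G.dist c b := hconn.dist_triangle
      have hac : G.dist a c ≤ 1 := by
        simpa using G.dist_le (SimpleGraph.Walk.cons h SimpleGraph.Walk.nil)
      have hcb : c ≠ b := by
        intro hcb
        have h0 : G.dist c b = 0 := by rw [hcb, SimpleGraph.dist_self]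
        have hd1 : G.dist a b = 1 := by omega
        exact hnadj (SimpleGraph.dist_eq_one_iff_adj.mp hd1)
      have hmem : G.dist c b ∈ D := ⟨c, b, hcb, hadj, rfl⟩
      have h1 : sInf D ≤ G.dist c b := Nat.sInf_le hmem
      omega

lemma choose_sub_mono {k t : ℕ} (hk : 1 ≤ k) (hkt : k ≤ t) :
    ((k.choose 2 : ℕ) : ℤ) - k ≤ ((t.choose 2 : ℕ) : ℤ) - t := by
  induction t, hkt using Nat.le_induction with
  | base => exact le_refl _
  | succ n hn ih =>
    have hc : (n + 1).choose 2 = n.choose 2 + n := by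
      rw [show (2:ℕ) = 1 + 1 from rfl, Nat.choose_succ_succ' n 1, Nat.choose_one_right, Nat.add_comm]
    have hn1 : (1 : ℤ) ≤ n := by exact_mod_cast hk.trans hn
    push_cast [hc]
    push_cast at ih
    linarith

end MainAux

universe u

lemma key_lemma : ∀ (n : ℕ) (V : Type u) [Fintype V] (G : SimpleGraph V),
    Fintype.card V = n → G.Connected → ∀ k : ℕ, 1 ≤ k → (k : ℕ∞) ≤ G.chromaticNumber →
    ((k.choose 2 : ℕ) : ℤ) - (k : ℤ) ≤ (G.edgeSet.ncard : ℤ) - (Fintype.card V : ℤ) := by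
  intro n
  induction n using Nat.strong_induction_on with
  | _ n ih =>
    intro V _ G hcard hconn k hk1 hk
    classical
    by_cases hcomp : ∀ x y : V, x ≠ y → G.Adj x y
    · have hG : G = ⊤ := by
        ext x y
        simp only [top_adj]
        exact ⟨fun h => h.ne, fun h => hcomp x y h⟩
      subst hG
      rw [chromaticNumber_top] at hk
      have hkn : k ≤ Fintype.card V := by exact_mod_cast hk
      have hE : (⊤ : SimpleGraph V).edgeSet.ncard = (Fintype.card V).choose 2 := by
        rw [Set.ncard_eq_toFinset_card']
        exact SimpleGraph.card_edgeFinset_top_eq_card_choose_two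
      rw [hE]
      exact choose_sub_mono hk1 hkn
    · obtain ⟨u, v, w, hne, huv, hw1, hw2⟩ := exists_dist_two hconn hcomp
      have hn1 : 1 ≤ n := by
        have : Nonempty V := hconn.nonempty
        have := Fintype.card_pos (α := V)
        omega
      have hcard' : Fintype.card {x : V // x ≠ v} = n - 1 := by
        have h1 : Fintype.card {x : V // ¬ x = v} = Fintype.card V - Fintype.card {x : V // x = v} :=
          Fintype.card_subtype_compl _
        rw [Fintype.card_subtype_eq] at h1
        simpa [hcard] using h1
      have hχ : (k : ℕ∞) ≤ (G.contractPair u v).chromaticNumber :=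
        le_trans hk (cp_chromaticNumber_le hne huv)
      have hconn' := cp_connected hne huv hconn
      have IH := ih (n - 1) (by omega) _ (G.contractPair u v) hcard' hconn' k hk1 hχ
      have hedge := cp_edge_card (G := G) (u := u) (v := v) (w := w) hw1 hw2
      rw [hcard'] at IH
      rw [hcard]
      have hc1 : ((n - 1 : ℕ) : ℤ) = (n : ℤ) - 1 := by
        have := hn1; push_cast [Nat.cast_sub this]; ring
      rw [hc1] at IH
      have hedge' : ((G.contractPair u v).edgeSet.ncard : ℤ) + 1 ≤ (G.edgeSet.ncard : ℤ) := by
        exact_mod_cast hedge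
      linarith

theorem stmt8 {V : Type*} [Fintype V] (G : SimpleGraph V) (hconn : G.Connected)
    (k : ℕ) (hchi : G.chromaticNumber = k) :
    ((k.choose 2 : ℕ) : ℤ) - (k : ℤ)
      ≤ (G.edgeSet.ncard : ℤ) - (Nat.card V : ℤ) := by
  have hne : Nonempty V := hconn.nonempty
  have hpos : 0 < G.chromaticNumber := chromaticNumber_pos G.colorable_of_fintype
  rw [hchi] at hpos
  have hk1 : 1 ≤ k := by exact_mod_cast hpos
  have hk : (k : ℕ∞) ≤ G.chromaticNumber := le_of_eq hchi.symm
  have := key_lemma (Fintype.card V) V G rfl hconn k hk1 hk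
  rwa [Nat.card_eq_fintype_card]
end

section
/- For a connected simple graph G, both the Hadwiger number h(G) and the chromatic number χ(G) are bounded above by ⌊(3 + √(9 + 8(|E| − |V|)))/2⌋. -/
open SimpleGraph

section Helpers
open Finset
private lemma my_parent {V : Type*} {G : SimpleGraph V} (hconn : G.Connected)
    (v₀ v : V) (h : v ≠ v₀) : ∃ w, G.Adj v w ∧ G.dist w v₀ < G.dist v v₀ := by
  obtain ⟨p, hp⟩ := hconn.exists_walk_length_eq_dist v v₀
  cases p with
  | nil => exact absurd rfl h
  | cons h' q =>
      refine ⟨_, h', lt_of_le_of_lt (SimpleGraph.dist_le q) ?_⟩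
      rw [← hp]; simp

private lemma my_outside {V : Type*} [Fintype V] {G : SimpleGraph V} (hconn : G.Connected)
    {s : Set V} {v₀ : V} (hv₀ : v₀ ∈ s) :
    sᶜ.ncard ≤ {e ∈ G.edgeSet | ¬ ∀ x ∈ e, x ∈ s}.ncard := by
  classical
  have hP : ∀ v : V, v ≠ v₀ → ∃ w, G.Adj v w ∧ G.dist w v₀ < G.dist v v₀ :=
    fun v hv => my_parent hconn v₀ v hv
  set p : V → V := fun v => if h : v ≠ v₀ then (hP v h).choose else v₀ with hpdef
  have hp1 : ∀ v, v ≠ v₀ → G.Adj v (p v) ∧ G.dist (p v) v₀ < G.dist v v₀ := by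
    intro v hv; simp only [hpdef, dif_pos hv]; exact (hP v hv).choose_spec
  apply Set.ncard_le_ncard_of_injOn (fun v => s(v, p v))
  · intro a ha
    have hane : a ≠ v₀ := fun h => ha (h ▸ hv₀)
    obtain ⟨hadj, -⟩ := hp1 a hane
    refine ⟨G.mem_edgeSet.2 hadj, ?_⟩
    intro hall
    exact ha (hall a (Sym2.mem_mk_left _ _))
  · intro a ha b hb hab
    have hane : a ≠ v₀ := fun h => ha (h ▸ hv₀)
    have hbne : b ≠ v₀ := fun h => hb (h ▸ hv₀)
    obtain ⟨-, hda⟩ := hp1 a hane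
    obtain ⟨-, hdb⟩ := hp1 b hbne
    rcases Sym2.eq_iff.1 hab with ⟨h1, h2⟩ | ⟨h1, h2⟩
    · exact h1
    · subst h1; rw [h2] at hda; omega

private lemma my_card_le {V : Type*} [Fintype V] {G : SimpleGraph V} (hconn : G.Connected) :
    Fintype.card V ≤ G.edgeSet.ncard + 1 := by
  classical
  obtain ⟨v₀⟩ := hconn.nonempty
  have h1 := my_outside (G := G) hconn (s := {v₀}) (v₀ := v₀) rfl
  have h2 : {e ∈ G.edgeSet | ¬ ∀ x ∈ e, x ∈ ({v₀} : Set V)}.ncard ≤ G.edgeSet.ncard :=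
    Set.ncard_le_ncard (fun e he => he.1) (Set.toFinite _)
  have h3 : ({v₀} : Set V).ncard + ({v₀}ᶜ : Set V).ncard = Nat.card V :=
    Set.ncard_add_ncard_compl _
  rw [Set.ncard_singleton] at h3
  rw [Nat.card_eq_fintype_card] at h3
  omega

private lemma my_induce_edges {V : Type*} [Fintype V] {G : SimpleGraph V} (s : Set V) :
    (G.induce s).edgeSet.ncard ≤ {e ∈ G.edgeSet | ∀ x ∈ e, x ∈ s}.ncard := by
  classical
  apply Set.ncard_le_ncard_of_injOn (Sym2.map Subtype.val)
  · intro e he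
    induction e with
    | _ a b =>
      rw [SimpleGraph.mem_edgeSet] at he
      have hadj : G.Adj ↑a ↑b := he
      refine ⟨G.mem_edgeSet.2 hadj, ?_⟩
      intro x hx
      rw [Sym2.map_pair_eq, Sym2.mem_iff] at hx
      rcases hx with rfl | rfl
      · exact a.2
      · exact b.2
  · exact (Sym2.map.injective Subtype.val_injective).injOn

private lemma my_inside {V : Type*} [Fintype V] {G : SimpleGraph V} {s : Set V}
    (hc : (G.induce s).Connected) :
    s.ncard ≤ {e ∈ G.edgeSet | ∀ x ∈ e, x ∈ s}.ncard + 1 := by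
  classical
  have h1 : Fintype.card s ≤ (G.induce s).edgeSet.ncard + 1 := my_card_le hc
  have h2 := my_induce_edges (G := G) s
  have h3 : Fintype.card s = s.ncard := by
    rw [← Nat.card_eq_fintype_card, Nat.card_coe_set_eq]
  omega

private lemma my_ncard_filter {V : Type*} [Fintype V] (G : SimpleGraph V)
    [Fintype G.edgeSet] [DecidableRel G.Adj] (P : Sym2 V → Prop) [DecidablePred P] :
    {e ∈ G.edgeSet | P e}.ncard = (G.edgeFinset.filter P).card := by
  classical
  rw [← Set.ncard_coe_finset]
  congr 1
  ext e
  simp [SimpleGraph.mem_edgeFinset]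

private lemma my_arith (m n j : ℕ) (h : 2*n + j*j ≤ 2*m + 3*j) :
    (j:ℤ) ≤ ⌊(3 + Real.sqrt (9 + 8*((m:ℝ) - n)))/2⌋ := by
  rw [Int.le_floor]
  have hc : ((2*n + j*j : ℕ) : ℝ) ≤ ((2*m + 3*j : ℕ) : ℝ) := Nat.cast_le.2 h
  push_cast at hc ⊢
  have hD : (2*(j:ℝ) - 3)^2 ≤ 9 + 8*((m:ℝ) - n) := by nlinarith
  have hy : (0:ℝ) ≤ 9 + 8*((m:ℝ) - n) := le_trans (sq_nonneg _) hD
  have h2 : (2*(j:ℝ) - 3) ≤ Real.sqrt (9 + 8*((m:ℝ)-n)) := by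
    rcases le_or_gt (2*(j:ℝ) - 3) 0 with h' | h'
    · exact h'.trans (Real.sqrt_nonneg _)
    · exact (Real.le_sqrt h'.le hy).2 hD
  linarith

private lemma my_hadwiger_count {V : Type*} [Fintype V] {G : SimpleGraph V} (hconn : G.Connected)
    {t : ℕ} (ht : 1 ≤ t) (hm : G.IsMinor (⊤ : SimpleGraph (Fin t))) :
    Nat.card V + t.choose 2 ≤ G.edgeSet.ncard + t := by
  classical
  obtain ⟨f, hne, hcon, hdisj, hedge⟩ := hm
  have hblock : ∀ {x : V} {i j : Fin t}, x ∈ f i → x ∈ f j → i = j := by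
    intro x i j hi hj
    by_contra h
    exact Set.disjoint_left.1 (hdisj i j h) hi hj
  set s : Set V := ⋃ i, f i with hs
  set Ef := G.edgeFinset with hEf
  set inS : Sym2 V → Prop := fun e => ∀ x ∈ e, x ∈ s with hinS
  set Ein := Ef.filter inS with hEin
  set Eout := Ef.filter (fun e => ¬ inS e) with hEout
  have hsplit : Ein.card + Eout.card = Ef.card :=
    Finset.card_filter_add_card_filter_not _
  -- A i : edges inside f i
  set A : Fin t → Finset (Sym2 V) := fun i => Ef.filter (fun e => ∀ x ∈ e, x ∈ f i) with hA
  have hAcard : ∀ i, (f i).ncard ≤ (A i).card + 1 := by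
    intro i
    have := my_inside (G := G) (s := f i) (hcon i)
    rwa [my_ncard_filter] at this
  -- choice of connecting edges
  set Kt := (⊤ : SimpleGraph (Fin t)) with hKt
  set Q : Sym2 (Fin t) → Sym2 V → Prop := fun e e' =>
    e' ∈ G.edgeSet ∧ ∃ i j a b, e = s(i, j) ∧ e' = s(a, b) ∧ a ∈ f i ∧ b ∈ f j with hQ
  have hQex : ∀ e ∈ Kt.edgeFinset, ∃ e', Q e e' := by
    intro e he
    induction e with
    | _ i j =>
      rw [SimpleGraph.mem_edgeFinset, SimpleGraph.mem_edgeSet] at he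
      obtain ⟨a, ha, b, hb, hab⟩ := hedge i j he
      exact ⟨s(a, b), G.mem_edgeSet.2 hab, i, j, a, b, rfl, rfl, ha, hb⟩
  obtain ⟨v₀, hv₀f⟩ := hne ⟨0, ht⟩
  have hv₀ : v₀ ∈ s := Set.mem_iUnion.2 ⟨_, hv₀f⟩
  set F : Sym2 (Fin t) → Sym2 V := fun e => if h : ∃ e', Q e e' then h.choose else s(v₀, v₀)
    with hF
  have hFspec : ∀ e ∈ Kt.edgeFinset, Q e (F e) := by
    intro e he
    have h := hQex e he
    simp only [hF, dif_pos h]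
    exact h.choose_spec
  set B := Kt.edgeFinset.image F with hB
  have hFinj : Set.InjOn F ↑Kt.edgeFinset := by
    intro e₁ he₁ e₂ he₂ heq
    obtain ⟨-, i, j, a, b, he, hab, hai, hbj⟩ := hFspec e₁ (by simpa using he₁)
    obtain ⟨-, i', j', a', b', he', hab', hai', hbj'⟩ := hFspec e₂ (by simpa using he₂)
    rw [heq, hab'] at hab
    rcases Sym2.eq_iff.1 hab.symm with ⟨rfl, rfl⟩ | ⟨rfl, rfl⟩
    · rw [he, he', hblock hai hai', hblock hbj hbj']
    · rw [he, he', hblock hai hbj', hblock hbj hai', Sym2.eq_swap]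
  have hBcard : B.card = t.choose 2 := by
    rw [hB, Finset.card_image_of_injOn hFinj]
    show (⊤ : SimpleGraph (Fin t)).edgeFinset.card = t.choose 2
    rw [SimpleGraph.card_edgeFinset_top_eq_card_choose_two, Fintype.card_fin]
  have hBsub : B ⊆ Ein := by
    intro e he
    obtain ⟨e₀, he₀, rfl⟩ := Finset.mem_image.1 he
    obtain ⟨hmem, i, j, a, b, -, hab, hai, hbj⟩ := hFspec e₀ he₀
    rw [hEin, Finset.mem_filter]
    refine ⟨SimpleGraph.mem_edgeFinset.2 hmem, ?_⟩
    intro x hx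
    rw [hab, Sym2.mem_iff] at hx
    rcases hx with rfl | rfl
    · exact Set.mem_iUnion.2 ⟨i, hai⟩
    · exact Set.mem_iUnion.2 ⟨j, hbj⟩
  have hAsub : ∀ i, A i ⊆ Ein := by
    intro i e he
    rw [hA, Finset.mem_filter] at he
    rw [hEin, Finset.mem_filter]
    exact ⟨he.1, fun x hx => Set.mem_iUnion.2 ⟨i, he.2 x hx⟩⟩
  have hAdisj : ∀ i ∈ (univ : Finset (Fin t)), ∀ j ∈ univ, i ≠ j → Disjoint (A i) (A j) := by
    intro i _ j _ hij
    rw [Finset.disjoint_left]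
    intro e hei hej
    rw [hA, Finset.mem_filter] at hei hej
    induction e with
    | _ a b =>
      exact hij (hblock (hei.2 a (Sym2.mem_mk_left _ _)) (hej.2 a (Sym2.mem_mk_left _ _)))
  have hABdisj : Disjoint (univ.biUnion A) B := by
    rw [Finset.disjoint_left]
    intro e heA heB
    obtain ⟨l, -, hel⟩ := Finset.mem_biUnion.1 heA
    rw [hA, Finset.mem_filter] at hel
    obtain ⟨e₀, he₀, rfl⟩ := Finset.mem_image.1 heB
    obtain ⟨-, i, j, a, b, hij, hab, hai, hbj⟩ := hFspec e₀ he₀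
    have hijne : i ≠ j := by
      rw [SimpleGraph.mem_edgeFinset, hij, SimpleGraph.mem_edgeSet] at he₀
      exact he₀.ne
    have h1 : a ∈ f l := hel.2 a (hab ▸ Sym2.mem_mk_left _ _)
    have h2 : b ∈ f l := hel.2 b (hab ▸ Sym2.mem_mk_right _ _)
    exact hijne ((hblock hai h1).trans (hblock h2 hbj))
  -- sum over branch sets
  have hsum : ∑ i, (f i).ncard ≤ (univ.biUnion A).card + t := by
    rw [Finset.card_biUnion hAdisj]
    calc ∑ i, (f i).ncard ≤ ∑ i : Fin t, ((A i).card + 1) := Finset.sum_le_sum fun i _ => hAcard i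
      _ = (∑ i, (A i).card) + t := by rw [Finset.sum_add_distrib]; simp
  have hEinB : (univ.biUnion A).card + B.card ≤ Ein.card := by
    rw [← Finset.card_union_of_disjoint hABdisj]
    apply Finset.card_le_card
    intro e he
    rcases Finset.mem_union.1 he with h | h
    · obtain ⟨l, -, hel⟩ := Finset.mem_biUnion.1 h
      exact hAsub l hel
    · exact hBsub h
  -- cardinality of s
  have hscard : s.ncard ≤ ∑ i, (f i).ncard := by
    classical
    have h1 : s ⊆ ↑(univ.biUnion fun i => (f i).toFinset) := by
      intro x hx
      obtain ⟨i, hi⟩ := Set.mem_iUnion.1 hx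
      simp only [Finset.coe_biUnion, Set.mem_iUnion, Finset.mem_coe, Set.mem_toFinset]
      exact ⟨i, by simp, hi⟩
    calc s.ncard ≤ (univ.biUnion fun i => (f i).toFinset).card := by
          rw [← Set.ncard_coe_finset]
          exact Set.ncard_le_ncard h1 (Set.toFinite _)
      _ ≤ ∑ i, ((f i).toFinset).card := Finset.card_biUnion_le
      _ = ∑ i, (f i).ncard := by simp [Set.ncard_eq_toFinset_card']
  -- outside edges
  have hout : Nat.card V ≤ Eout.card + s.ncard := by
    have h1 := my_outside (G := G) hconn hv₀
    rw [my_ncard_filter] at h1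
    have hEoutEq : Eout = G.edgeFinset.filter (fun e => ¬ ∀ x ∈ e, x ∈ s) := rfl
    rw [← hEoutEq] at h1
    have h2 := Set.ncard_add_ncard_compl s
    omega
  -- combine
  have hm' : Ef.card = G.edgeSet.ncard := by
    rw [← Set.ncard_coe_finset]
    congr 1
    exact Set.coe_toFinset _
  -- need: s.ncard relation: careful, we need lower bound on Ein via branch sets:
  omega

private lemma my_chrom_count {V : Type*} [Fintype V] {G : SimpleGraph V} (hconn : G.Connected)
    {k : ℕ} (hk : 3 ≤ k) (hnc : ¬ G.Colorable (k-1)) :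
    2 * Nat.card V + k * k ≤ 2 * G.edgeSet.ncard + 3 * k := by
  classical
  set S : Finset (Finset V) :=
    (univ : Finset (Finset V)).filter (fun s => ¬ (G.induce ↑s).Colorable (k-1)) with hS
  have hSuniv : (univ : Finset V) ∈ S := by
    rw [hS, Finset.mem_filter]
    refine ⟨Finset.mem_univ _, fun hcol => hnc ?_⟩
    have hemb : G ↪g G.induce ↑(univ : Finset V) := by
      rw [Finset.coe_univ]
      exact (SimpleGraph.induceUnivIso G).symm.toEmbedding
    exact SimpleGraph.Colorable.of_hom hemb.toHom hcol
  obtain ⟨s, hsS, hmin⟩ := Finset.exists_min_image S Finset.card ⟨_, hSuniv⟩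
  rw [hS, Finset.mem_filter] at hsS
  have hsnc : ¬ (G.induce (↑s : Set V)).Colorable (k-1) := hsS.2
  -- s has at least k vertices
  have hks : k ≤ s.card := by
    by_contra h
    push_neg at h
    have hcard : Fintype.card (↑s : Set V) = s.card := by simp
    exact hsnc (((G.induce ↑s).colorable_of_fintype).mono (by rw [hcard]; omega))
  -- every vertex of s has ≥ k-1 neighbors within s
  have hdeg : ∀ v ∈ s, k - 1 ≤ ((s.erase v).filter (G.Adj v)).card := by
    intro v hv
    by_contra hlt
    push_neg at hlt
    have herase : (G.induce (↑(s.erase v) : Set V)).Colorable (k-1) := by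
      by_contra hcol
      have : s.erase v ∈ S := by rw [hS, Finset.mem_filter]; exact ⟨Finset.mem_univ _, hcol⟩
      have := hmin _ this
      have := Finset.card_erase_lt_of_mem hv
      omega
    obtain ⟨c⟩ := herase
    set N := (s.erase v).filter (G.Adj v) with hN
    set used : Finset (Fin (k-1)) :=
      N.attach.image (fun w => c ⟨w.1,
        Finset.mem_coe.2 (Finset.mem_erase.2 (by
          have h := Finset.mem_filter.1 w.2
          exact ⟨(Finset.mem_erase.1 h.1).1, (Finset.mem_erase.1 h.1).2⟩))⟩) with hused
    have husedcard : used.card < k - 1 := by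
      calc used.card ≤ N.attach.card := Finset.card_image_le
        _ = N.card := Finset.card_attach
        _ < k - 1 := by omega
    have : ∃ a : Fin (k-1), a ∉ used := by
      by_contra hall
      push_neg at hall
      have : (univ : Finset (Fin (k-1))).card ≤ used.card :=
        Finset.card_le_card (fun a _ => hall a)
      rw [Finset.card_univ, Fintype.card_fin] at this
      omega
    obtain ⟨a, ha⟩ := this
    apply hsnc
    refine ⟨SimpleGraph.Coloring.mk
      (fun x => if hx : (x : V) = v then a
        else c ⟨x, by
          have hxs : (x : V) ∈ s := x.2
          exact_mod_cast Finset.mem_coe.2 (Finset.mem_erase.2 ⟨hx, hxs⟩)⟩) ?_⟩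
    rintro x y hadj
    have hxy : G.Adj (x : V) (y : V) := hadj
    by_cases hx : (x : V) = v <;> by_cases hy : (y : V) = v
    · exact absurd (hx.trans hy.symm) hxy.ne
    · simp only [dif_pos hx, dif_neg hy]
      intro heq
      apply ha
      rw [heq]
      rw [hused]
      apply Finset.mem_image.2
      have hyN : (y : V) ∈ N := by
        rw [hN, Finset.mem_filter]
        exact ⟨Finset.mem_erase.2 ⟨hy, y.2⟩, hx ▸ hxy⟩
      exact ⟨⟨(y : V), hyN⟩, Finset.mem_attach _ _, rfl⟩
    · simp only [dif_neg hx, dif_pos hy]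
      intro heq
      apply ha
      rw [← heq, hused]
      apply Finset.mem_image.2
      have hxN : (x : V) ∈ N := by
        rw [hN, Finset.mem_filter]
        exact ⟨Finset.mem_erase.2 ⟨hx, x.2⟩, hy ▸ hxy.symm⟩
      exact ⟨⟨(x : V), hxN⟩, Finset.mem_attach _ _, rfl⟩
    · simp only [dif_neg hx, dif_neg hy]
      have hxm : (↑x : V) ∈ (↑(s.erase v) : Set V) :=
        Finset.mem_coe.2 (Finset.mem_erase.2 ⟨hx, Finset.mem_coe.1 x.2⟩)
      have hym : (↑y : V) ∈ (↑(s.erase v) : Set V) :=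
        Finset.mem_coe.2 (Finset.mem_erase.2 ⟨hy, Finset.mem_coe.1 y.2⟩)
      have : (G.induce (↑(s.erase v) : Set V)).Adj ⟨↑x, hxm⟩ ⟨↑y, hym⟩ := hxy
      exact c.valid this
  -- handshake on induce s
  set H := G.induce (↑s : Set V) with hH
  have hdegH : ∀ x : (↑s : Set V), k - 1 ≤ H.degree x := by
    intro x
    rw [← SimpleGraph.card_neighborFinset_eq_degree]
    have := hdeg (x : V) (by exact_mod_cast x.2)
    refine le_trans this (Finset.card_le_card_of_injOn
      (fun w => if hw : w ∈ (↑s : Set V) then (⟨w, hw⟩ : (↑s : Set V)) else x) ?_ ?_)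
    · intro w hw
      rw [Finset.mem_coe, Finset.mem_filter, Finset.mem_erase] at hw
      have hws : w ∈ (↑s : Set V) := by exact_mod_cast hw.1.2
      dsimp only
      rw [dif_pos hws]
      rw [Finset.mem_coe, SimpleGraph.mem_neighborFinset]
      show G.Adj (x : V) w
      exact hw.2
    · intro w₁ hw₁ w₂ hw₂ heq
      rw [Finset.mem_coe, Finset.mem_filter, Finset.mem_erase] at hw₁ hw₂
      have h1 : w₁ ∈ (↑s : Set V) := by exact_mod_cast hw₁.1.2
      have h2 : w₂ ∈ (↑s : Set V) := by exact_mod_cast hw₂.1.2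
      dsimp only at heq
      rw [dif_pos h1, dif_pos h2] at heq
      exact congrArg Subtype.val heq
  have hhandshake : ∑ x : (↑s : Set V), H.degree x = 2 * H.edgeFinset.card :=
    SimpleGraph.sum_degrees_eq_twice_card_edges H
  have hEinLower : s.card * (k - 1) ≤ 2 * H.edgeFinset.card := by
    rw [← hhandshake]
    calc s.card * (k-1) = ∑ _x : (↑s : Set V), (k-1) := by
          rw [Finset.sum_const, Finset.card_univ]
          simp [Fintype.card_coe, mul_comm]
      _ ≤ ∑ x : (↑s : Set V), H.degree x := Finset.sum_le_sum fun x _ => hdegH x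
  -- edges inside vs outside
  have hsplit : (G.edgeFinset.filter (fun e => ∀ x ∈ e, x ∈ (↑s : Set V))).card
      + (G.edgeFinset.filter (fun e => ¬ ∀ x ∈ e, x ∈ (↑s : Set V))).card
      = G.edgeFinset.card :=
    Finset.card_filter_add_card_filter_not _
  have h2 : H.edgeSet.ncard = H.edgeFinset.card := by
    rw [← Set.ncard_coe_finset]
    congr 1
    exact (Set.coe_toFinset _).symm
  have hEinH : H.edgeSet.ncard
      ≤ (G.edgeFinset.filter (fun e => ∀ x ∈ e, x ∈ (↑s : Set V))).card := by
    have h1 := my_induce_edges (G := G) (↑s : Set V)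
    rw [my_ncard_filter] at h1
    exact h1
  have hv₀ : ∃ v₀ : V, v₀ ∈ (↑s : Set V) := by
    have hne : s.Nonempty := Finset.card_pos.1 (by omega)
    exact ⟨hne.choose, Finset.mem_coe.2 hne.choose_spec⟩
  obtain ⟨v₀, hv₀⟩ := hv₀
  have hout : Nat.card V ≤
      (G.edgeFinset.filter (fun e => ¬ ∀ x ∈ e, x ∈ (↑s : Set V))).card + s.card := by
    have h1 := my_outside (G := G) hconn hv₀
    rw [my_ncard_filter] at h1
    have h3 := Set.ncard_add_ncard_compl (↑s : Set V)
    rw [Set.ncard_coe_finset] at h3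
    omega
  have hm' : G.edgeFinset.card = G.edgeSet.ncard := by
    rw [← Set.ncard_coe_finset]
    congr 1
    exact Set.coe_toFinset _
  -- final arithmetic
  have e1 : s.card * (k - 1) = s.card * (k - 3) + s.card * 2 := by
    rw [← Nat.mul_add]
    congr 1
    omega
  have e2 : k * (k - 3) ≤ s.card * (k - 3) := Nat.mul_le_mul_right _ hks
  have e3 : k * (k - 3) + k * 3 = k * k := by
    rw [← Nat.mul_add]
    congr 1
    omega
  omega

theorem stmt9 {V : Type*} [Fintype V] (G : SimpleGraph V) (hconn : G.Connected)
    (k : ℕ) (hchi : G.chromaticNumber = k) :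
    (G.hadwigerNumber : ℤ) ≤
      ⌊(3 + Real.sqrt (9 + 8 * ((G.edgeSet.ncard : ℝ) - (Nat.card V : ℝ)))) / 2⌋ ∧
    (k : ℤ) ≤
      ⌊(3 + Real.sqrt (9 + 8 * ((G.edgeSet.ncard : ℝ) - (Nat.card V : ℝ)))) / 2⌋ := by
  classical
  set m := G.edgeSet.ncard with hm
  set n := Nat.card V with hn
  have hnm : n ≤ m + 1 := by
    have := my_card_le hconn
    rw [hn, Nat.card_eq_fintype_card]
    omega
  have hbase : (2:ℤ) ≤ ⌊(3 + Real.sqrt (9 + 8*((m:ℝ) - n)))/2⌋ :=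
    my_arith m n 2 (by omega)
  constructor
  · -- Hadwiger bound
    set B := ⌊(3 + Real.sqrt (9 + 8*((m:ℝ) - n)))/2⌋ with hB
    have hB0 : (0:ℤ) ≤ B := le_trans (by norm_num) hbase
    have hbound : ∀ t ∈ {t : ℕ | G.IsMinor (⊤ : SimpleGraph (Fin t))}, t ≤ B.toNat := by
      intro t ht
      rcases le_or_gt t 2 with h2 | h3
      · have : (2:ℤ).toNat ≤ B.toNat := Int.toNat_le_toNat hbase
        simpa using le_trans h2 this
      · have hcount := my_hadwiger_count hconn (by omega : 1 ≤ t) ht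
        have hmul : t * (t - 1) = 2 * t.choose 2 := by
          rw [Nat.choose_two_right]
          rw [Nat.mul_div_cancel' (Nat.even_mul_pred_self t).two_dvd]
        have hsq : t * t = t * (t - 1) + t := by
          have : t * (t-1) + t * 1 = t * ((t-1) + 1) := (Nat.mul_add t (t-1) 1).symm
          have h1 : (t - 1) + 1 = t := by omega
          rw [h1] at this
          omega
        have harith : 2*n + t*t ≤ 2*m + 3*t := by omega
        have := my_arith m n t harith
        rw [← hB] at this
        exact Int.le_toNat hB0 |>.2 this
      
    have hsup : G.hadwigerNumber ≤ B.toNat := by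
      apply csSup_le
      · refine ⟨0, ?_⟩
        exact ⟨Fin.elim0, fun w => w.elim0, fun w => w.elim0, fun w => w.elim0,
          fun w => w.elim0⟩
      · exact hbound
    calc (G.hadwigerNumber : ℤ) ≤ (B.toNat : ℤ) := by exact_mod_cast hsup
      _ = B := Int.toNat_of_nonneg hB0
  · -- chromatic bound
    rcases le_or_gt k 2 with h2 | h3
    · calc (k:ℤ) ≤ 2 := by exact_mod_cast h2
        _ ≤ _ := hbase
    · have hnc : ¬ G.Colorable (k - 1) := by
        intro hcol
        have h1 := hcol.chromaticNumber_le
        rw [hchi] at h1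
        have : k ≤ k - 1 := by exact_mod_cast h1
        omega
      have hcount := my_chrom_count hconn (by omega : 3 ≤ k) hnc
      exact my_arith m n k hcount
end Helpers
end

section
/- Let G be a connected simple graph with an edge e. Then there is an injection ψ from the set of induced cycles of G/e into the set of induced cycles of G such that for every induced cycle C of G/e, contracting e in ψ(C) yields C. -/
open SimpleGraph

/-- The quotient map on vertices for the contraction identifying `v` into `u`. -/
def contractMap {V : Type*} [DecidableEq V] {u v : V} (huv : u ≠ v) :
    V → {x : V // x ≠ v} :=
  fun x => if h : x = v then ⟨u, huv⟩ else ⟨x, h⟩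


section Aux

lemma cg_val {m : ℕ} (p q : Fin (m+2)) : (cycleGraph (m+2)).Adj p q ↔
    (p.val + 1 = q.val ∨ q.val + 1 = p.val ∨ (p.val = 0 ∧ q.val = m+1) ∨ (q.val = 0 ∧ p.val = m+1)) := by
  rw [cycleGraph_adj]
  rw [sub_eq_iff_eq_add, sub_eq_iff_eq_add]
  rw [add_comm (1 : Fin (m+2)) q, add_comm (1 : Fin (m+2)) p]
  rw [Fin.ext_iff, Fin.ext_iff, Fin.val_add_one, Fin.val_add_one]
  have hp := p.isLt; have hq := q.isLt
  split_ifs with h1 h2 h2 <;>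
    simp only [Fin.ext_iff, Fin.val_last] at h1 h2 <;> omega

/-- Rotation automorphism of the cycle graph. -/
def rotIso {m : ℕ} (c : Fin (m+3)) : cycleGraph (m+3) ≃g cycleGraph (m+3) where
  toEquiv := Equiv.subRight c
  map_rel_iff' := by
    intro x y
    simp only [Equiv.subRight_apply, cycleGraph_adj]
    rw [sub_sub_sub_cancel_right, sub_sub_sub_cancel_right]

/-- Reflection automorphism of the cycle graph. -/
def reflIso {m : ℕ} (c : Fin (m+3)) : cycleGraph (m+3) ≃g cycleGraph (m+3) where
  toEquiv := Equiv.subLeft c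
  map_rel_iff' := by
    intro x y
    simp only [Equiv.subLeft_apply, cycleGraph_adj]
    rw [sub_sub_sub_cancel_left, sub_sub_sub_cancel_left, or_comm]

lemma nbr_iff {m : ℕ} {α : Type*} {K : SimpleGraph α} (φ : K ≃g cycleGraph (m+3))
    (x y : α) : K.Adj x y ↔ (y = φ.symm (φ x - 1) ∨ y = φ.symm (φ x + 1)) := by
  have h1 : ∀ z w : Fin (m+3), z - w = 1 ↔ w = z - 1 := by
    intro z w
    constructor <;> intro h
    · rw [← h]; abel
    · rw [h]; abel
  have h1' : ∀ z w : Fin (m+3), w - z = 1 ↔ w = z + 1 := by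
    intro z w
    constructor <;> intro h
    · rw [← h]; abel
    · rw [h]; abel
  have h2 : ∀ z, (y = φ.symm z) ↔ (φ y = z) := by
    intro z
    constructor
    · rintro rfl; exact φ.apply_symm_apply z
    · rintro rfl; exact (φ.symm_apply_apply y).symm
  rw [← φ.map_adj_iff, cycleGraph_adj, h1, h1', h2, h2]

lemma transfer {α β : Type*} {K : SimpleGraph α} {K' : SimpleGraph β} {t : Set α} {s : Set β}
    (e : ↥t ≃ ↥s) (h : ∀ x y : ↥t, K'.Adj (e x : β) (e y : β) ↔ K.Adj (x : α) (y : α))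
    (hs : K'.IsInducedCycle s) : K.IsInducedCycle t := by
  obtain ⟨n, hn, ⟨φ⟩⟩ := hs
  exact ⟨n, hn, ⟨(RelIso.mk e (fun {a b} => h a b)).trans φ⟩⟩

lemma img_val {V : Type*} [DecidableEq V] {u v : V} (huv : u ≠ v)
    (s : Set {x : V // x ≠ v}) : contractMap huv '' (Subtype.val '' s) = s := by
  ext w
  constructor
  · rintro ⟨x, ⟨w', hw', rfl⟩, rfl⟩
    have h : contractMap huv ↑w' = w' := by
      rw [contractMap, dif_neg w'.2]
    rw [h]; exact hw'
  · intro hw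
    refine ⟨↑w, ⟨w, hw, rfl⟩, ?_⟩
    rw [contractMap, dif_neg w.2]

variable {V : Type*} [DecidableEq V] {G : SimpleGraph V} {u v : V}

/-- Basic adjacency facts about the contraction. -/
lemma adj_of_ne (he : G.Adj u v) {x y : {z : V // z ≠ v}}
    (hx : (x : V) ≠ u) (hy : (y : V) ≠ u) :
    (G.contractPair u v).Adj x y ↔ G.Adj (x : V) (y : V) := by
  constructor
  · rintro ⟨hne, h | ⟨h1, -⟩ | ⟨h1, -⟩⟩
    · exact h
    · exact absurd h1 hx
    · exact absurd h1 hy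
  · intro h
    exact ⟨h.ne, Or.inl h⟩

lemma adj_u (he : G.Adj u v) {y : {z : V // z ≠ v}} :
    (G.contractPair u v).Adj ⟨u, he.ne⟩ y ↔ (u ≠ (y : V) ∧ (G.Adj u y ∨ G.Adj v y)) := by
  constructor
  · rintro ⟨hne, h | ⟨-, h2⟩ | ⟨h1, -⟩⟩
    · exact ⟨hne, Or.inl h⟩
    · exact ⟨hne, Or.inr h2⟩
    · exact absurd h1.symm hne
  · rintro ⟨hne, h | h⟩
    · exact ⟨hne, Or.inl h⟩
    · exact ⟨hne, Or.inr (Or.inl ⟨rfl, h⟩)⟩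

/-- Case where the cycle in the contraction lifts with the same vertex set. -/
lemma caseSame (he : G.Adj u v) (s : Set {x : V // x ≠ v})
    (hs : (G.contractPair u v).IsInducedCycle s)
    (hadj : ∀ x y : ↥s, (G.contractPair u v).Adj ↑x ↑y ↔ G.Adj ((x : {z : V // z ≠ v}) : V) ((y : {z : V // z ≠ v}) : V)) :
    ∃ t, G.IsInducedCycle t ∧ contractMap he.ne '' t = s := by
  refine ⟨Subtype.val '' s, ?_, img_val he.ne s⟩
  have hf : Function.Bijective (fun w : ↥s => (⟨(w : {z : V // z ≠ v}), ⟨↑w, w.2, rfl⟩⟩ : ↥(Subtype.val '' s))) := by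
    constructor
    · intro w1 w2 h
      have h' : ((w1 : {z : V // z ≠ v}) : V) = ((w2 : {z : V // z ≠ v}) : V) := by
        have := congrArg (fun z : ↥(Subtype.val '' s) => (z : V)) h
        simpa using this
      exact Subtype.ext (Subtype.ext h')
    · rintro ⟨x, w, hw, rfl⟩
      exact ⟨⟨w, hw⟩, rfl⟩
  refine transfer (Equiv.ofBijective _ hf).symm ?_ hs
  intro x y
  have hx : (((Equiv.ofBijective _ hf) ((Equiv.ofBijective _ hf).symm x) : ↥(Subtype.val '' s)) : V) = (x : V) := by
    rw [Equiv.apply_symm_apply]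
  have hy : (((Equiv.ofBijective _ hf) ((Equiv.ofBijective _ hf).symm y) : ↥(Subtype.val '' s)) : V) = (y : V) := by
    rw [Equiv.apply_symm_apply]
  rw [hadj]
  rw [show ((((Equiv.ofBijective _ hf).symm x : ↥s) : {z : V // z ≠ v}) : V) = (x : V) from hx,
      show ((((Equiv.ofBijective _ hf).symm y : ↥s) : {z : V // z ≠ v}) : V) = (y : V) from hy]

end Aux
lemma transfer' {α β : Type*} {K : SimpleGraph α} {K' : SimpleGraph β} {t : Set α} {s : Set β}
    (e : ↥s ≃ ↥t) (h : ∀ x y : ↥s, K'.Adj (x : β) (y : β) ↔ K.Adj (e x : α) (e y : α))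
    (hs : K'.IsInducedCycle s) : K.IsInducedCycle t := by
  refine transfer e.symm (fun x y => ?_) hs
  rw [h (e.symm x) (e.symm y), e.apply_symm_apply, e.apply_symm_apply]

lemma caseII {V : Type*} [DecidableEq V] {G : SimpleGraph V} {u v : V}
    (he : G.Adj u v) (s : Set {x : V // x ≠ v})
    (hs : (G.contractPair u v).IsInducedCycle s)
    (hus : (⟨u, he.ne⟩ : {x : V // x ≠ v}) ∈ s)
    (hN : ∀ y : ↥s, (G.contractPair u v).Adj ⟨u, he.ne⟩ ↑y →
      G.Adj v ((y : {z : V // z ≠ v}) : V)) :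
    ∃ t, G.IsInducedCycle t ∧ contractMap he.ne '' t = s := by
  classical
  set u0 : ↥s := ⟨⟨u, he.ne⟩, hus⟩ with hu0
  set t : Set V := (Subtype.val '' s \ {u}) ∪ {v} with ht
  have hmem : ∀ w : ↥s, w ≠ u0 → ((w : {x : V // x ≠ v}) : V) ∈ t := by
    intro w hw
    left
    exact ⟨⟨↑w, w.2, rfl⟩, fun hc => hw (Subtype.ext (Subtype.ext hc))⟩
  set f : ↥s → ↥t := fun w => if h : w = u0 then ⟨v, Or.inr rfl⟩ else ⟨↑↑w, hmem w h⟩ with hfdef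
  have hfv : ∀ w (h : w = u0), f w = ⟨v, Or.inr rfl⟩ := fun w h => dif_pos h
  have hfn : ∀ w (h : w ≠ u0), f w = ⟨↑↑w, hmem w h⟩ := fun w h => dif_neg h
  have hval : ∀ w (h : w ≠ u0), ((f w : V)) = ↑↑w := fun w h => by rw [hfn w h]
  have hvalv : ∀ w (h : w = u0), ((f w : V)) = v := fun w h => by rw [hfv w h]
  have hf : Function.Bijective f := by
    constructor
    · intro w1 w2 h
      by_cases h1 : w1 = u0 <;> by_cases h2 : w2 = u0
      · rw [h1, h2]
      · exact absurd ((hvalv w1 h1).symm.trans ((congrArg (fun z : ↥t => (z : V)) h).trans (hval w2 h2))) (Ne.symm (w2.1).2)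
      · exact absurd ((hvalv w2 h2).symm.trans ((congrArg (fun z : ↥t => (z : V)) h.symm).trans (hval w1 h1))) (Ne.symm (w1.1).2)
      · exact Subtype.ext (Subtype.ext ((hval w1 h1).symm.trans ((congrArg (fun z : ↥t => (z : V)) h).trans (hval w2 h2))))
    · rintro ⟨x, hx⟩
      rcases hx with ⟨⟨w, hw, rfl⟩, hxu⟩ | hxv
      · have hwne : (⟨w, hw⟩ : ↥s) ≠ u0 := by
          intro hc
          exact hxu (by rw [show (w : V) = ((⟨w, hw⟩ : ↥s) : {x : V // x ≠ v}) from rfl, hc]; rfl)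
        exact ⟨⟨w, hw⟩, Subtype.ext (by rw [hval _ hwne])⟩
      · exact ⟨u0, Subtype.ext (by rw [hvalv u0 rfl]; exact hxv.symm)⟩
  refine ⟨t, transfer' (Equiv.ofBijective f hf) (fun w1 w2 => ?_) hs, ?_⟩
  · -- adjacency
    show (G.contractPair u v).Adj ↑w1 ↑w2 ↔ G.Adj ↑(f w1) ↑(f w2)
    have base : ∀ w1 w2 : ↥s, w1 = u0 → w2 ≠ u0 →
        ((G.contractPair u v).Adj ↑w1 ↑w2 ↔ G.Adj ↑(f w1) ↑(f w2)) := by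
      intro w1 w2 h1 h2
      rw [hvalv w1 h1, hval w2 h2]
      subst h1
      constructor
      · exact hN w2
      · intro h
        refine (adj_u he).mpr ⟨fun hc => h2 (Subtype.ext (Subtype.ext hc.symm)), Or.inr h⟩
    by_cases h1 : w1 = u0 <;> by_cases h2 : w2 = u0
    · subst h1; subst h2
      constructor <;> intro h <;> exact absurd rfl h.ne
    · exact base w1 w2 h1 h2
    · have := base w2 w1 h2 h1
      exact ⟨fun h => ((this.mp h.symm)).symm, fun h => (this.mpr h.symm).symm⟩
    · rw [hval w1 h1, hval w2 h2]
      exact adj_of_ne he (fun hc => h1 (Subtype.ext (Subtype.ext hc)))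
        (fun hc => h2 (Subtype.ext (Subtype.ext hc)))
  · -- image
    ext w
    constructor
    · rintro ⟨x, hx, rfl⟩
      rcases hx with ⟨⟨w', hw', rfl⟩, -⟩ | hxv
      · rw [contractMap, dif_neg w'.2]; exact hw'
      · rcases hxv with rfl
        rw [contractMap, dif_pos rfl]; exact hus
    · intro hw
      by_cases hwu : w = ⟨u, he.ne⟩
      · exact ⟨v, Or.inr rfl, by rw [contractMap, dif_pos rfl, hwu]⟩
      · exact ⟨↑w, Or.inl ⟨⟨w, hw, rfl⟩, fun hc => hwu (Subtype.ext hc)⟩,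
          by rw [contractMap, dif_neg w.2]⟩
lemma caseIII {V : Type*} [DecidableEq V] {G : SimpleGraph V} {u v : V}
    (he : G.Adj u v) (s : Set {x : V // x ≠ v}) (m : ℕ)
    (hus : (⟨u, he.ne⟩ : {x : V // x ≠ v}) ∈ s)
    (χ : (SimpleGraph.induce s (G.contractPair u v)) ≃g cycleGraph (m+3))
    (a b : ↥s)
    (hχu : χ ⟨⟨u, he.ne⟩, hus⟩ = 0) (hχa : χ a = -1) (hχb : χ b = 1)
    (hva : G.Adj v ((a : {z : V // z ≠ v}) : V)) (hnua : ¬ G.Adj u ((a : {z : V // z ≠ v}) : V))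
    (hub : G.Adj u ((b : {z : V // z ≠ v}) : V)) (hnvb : ¬ G.Adj v ((b : {z : V // z ≠ v}) : V)) :
    ∃ t, G.IsInducedCycle t ∧ contractMap he.ne '' t = s := by
  classical
  set u0 : ↥s := ⟨⟨u, he.ne⟩, hus⟩ with hu0
  have hinj : Function.Injective χ := χ.toEquiv.injective
  -- value characterizations
  have h0 : ∀ y : ↥s, (χ y).val = 0 ↔ y = u0 := by
    intro y
    rw [← hinj.eq_iff (a := y) (b := u0), hχu, Fin.ext_iff]
    rfl
  have ha' : ∀ y : ↥s, (χ y).val = m+2 ↔ y = a := by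
    intro y
    rw [← hinj.eq_iff (a := y) (b := a), hχa, Fin.ext_iff, Fin.coe_neg_one]
  have hb' : ∀ y : ↥s, (χ y).val = 1 ↔ y = b := by
    intro y
    rw [← hinj.eq_iff (a := y) (b := b), hχb, Fin.ext_iff, Fin.val_one]
  -- neighbor characterization of u0
  have hN : ∀ y : ↥s, (G.contractPair u v).Adj ⟨u, he.ne⟩ ↑y ↔ (y = a ∨ y = b) := by
    intro y
    have h1 : χ.symm (χ u0 - 1) = a := by
      rw [hχu, zero_sub, ← hχa]
      exact χ.symm_apply_apply a
    have h2 : χ.symm (χ u0 + 1) = b := by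
      rw [hχu, zero_add, ← hχb]
      exact χ.symm_apply_apply b
    have := nbr_iff χ u0 y
    rw [h1, h2] at this
    exact this
  have hne_u0 : ∀ y : ↥s, y ≠ u0 → ((y : {z : V // z ≠ v}) : V) ≠ u :=
    fun y h hc => h (Subtype.ext (Subtype.ext hc))
  have hGu : ∀ y : ↥s, y ≠ u0 → (G.Adj u ↑↑y ↔ y = b) := by
    intro y hy
    constructor
    · intro h
      rcases (hN y).mp ((adj_u he).mpr ⟨h.ne, Or.inl h⟩) with rfl | rfl
      · exact absurd h hnua
      · rfl
    · rintro rfl; exact hub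
  have hGv : ∀ y : ↥s, y ≠ u0 → (G.Adj v ↑↑y ↔ y = a) := by
    intro y hy
    constructor
    · intro h
      rcases (hN y).mp ((adj_u he).mpr ⟨Ne.symm (hne_u0 y hy), Or.inr h⟩) with rfl | rfl
      · rfl
      · exact absurd h hnvb
    · rintro rfl; exact hva
  have hHadj : ∀ x y : ↥s, (G.contractPair u v).Adj ↑x ↑y ↔ (cycleGraph (m+3)).Adj (χ x) (χ y) :=
    fun x y => (χ.map_adj_iff).symm
  -- the lifted vertex set
  set t : Set V := Subtype.val '' s ∪ {v} with ht
  have mem_of : ∀ (x : ↥t) (h : (x : V) ≠ v), (⟨(x : V), h⟩ : {z : V // z ≠ v}) ∈ s := by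
    rintro ⟨x, hx⟩ h
    rcases hx with ⟨w, hw, rfl⟩ | hx
    · have : (⟨(w : V), h⟩ : {z : V // z ≠ v}) = w := Subtype.ext rfl
      rw [this]; exact hw
    · exact absurd hx h
  set f : ↥t → Fin (m+4) := fun x =>
    if h : (x : V) = v then Fin.last (m+3) else Fin.castSucc (χ ⟨⟨(x : V), h⟩, mem_of x h⟩)
    with hfdef
  have hfv : ∀ (x : ↥t) (h : (x : V) = v), f x = Fin.last (m+3) := fun x h => dif_pos h
  have hfn : ∀ (x : ↥t) (h : (x : V) ≠ v), f x = Fin.castSucc (χ ⟨⟨(x : V), h⟩, mem_of x h⟩) :=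
    fun x h => dif_neg h
  have hf : Function.Bijective f := by
    constructor
    · intro x y h
      by_cases hx : (x : V) = v <;> by_cases hy : (y : V) = v
      · exact Subtype.ext (hx.trans hy.symm)
      · rw [hfv x hx, hfn y hy] at h
        exact absurd h.symm (Fin.castSucc_lt_last _).ne
      · rw [hfv y hy, hfn x hx] at h
        exact absurd h (Fin.castSucc_lt_last _).ne
      · rw [hfn x hx, hfn y hy] at h
        have := hinj (Fin.castSucc_injective _ h)
        exact Subtype.ext (congrArg (fun z : ↥s => ((z : {w : V // w ≠ v}) : V)) this)
    · intro k
      by_cases hk : k = Fin.last (m+3)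
      · exact ⟨⟨v, Or.inr rfl⟩, (hfv _ rfl).trans hk.symm⟩
      · set w : ↥s := χ.symm (k.castPred hk) with hw
        have hwv : ((w : {z : V // z ≠ v}) : V) ≠ v := (w : {z : V // z ≠ v}).2
        set xx : ↥t := ⟨↑↑w, Or.inl ⟨↑w, w.2, rfl⟩⟩ with hxx
        have hxxv : (xx : V) ≠ v := hwv
        refine ⟨xx, ?_⟩
        rw [hfn xx hxxv]
        have hcast : (⟨⟨(xx : V), hxxv⟩, mem_of xx hxxv⟩ : ↥s) = w :=
          Subtype.ext (Subtype.ext rfl)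
        rw [hcast, hw, χ.apply_symm_apply, Fin.castSucc_castPred]
  have hD : ∀ q : Fin (m+3), ((Fin.last (m+3) - q.castSucc : Fin (m+4)).val = 1 ↔ q.val = m+2) := by
    intro q
    have hq := q.isLt
    rw [Fin.sub_def]
    show (((m+4) - q.val) + (m+3)) % (m+4) = 1 ↔ _
    have e : ((m+4) - q.val) + (m+3) = ((m+3) - q.val) + (m+4) := by omega
    rw [e, Nat.add_mod_right, Nat.mod_eq_of_lt (by omega)]
    omega
  have hE : ∀ q : Fin (m+3), ((q.castSucc - Fin.last (m+3) : Fin (m+4)).val = 1 ↔ q.val = 0) := by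
    intro q
    have hq := q.isLt
    rw [Fin.sub_def]
    show (((m+4) - (m+3)) + q.val) % (m+4) = 1 ↔ _
    have e : ((m+4) - (m+3)) + q.val = q.val + 1 := by omega
    rw [e, Nat.mod_eq_of_lt (by omega)]
    omega
  have hC : ∀ p q : Fin (m+3), ((p.castSucc - q.castSucc : Fin (m+4)).val = 1 ↔ p.val = q.val + 1) := by
    intro p q
    have hp := p.isLt
    have hq := q.isLt
    rw [Fin.sub_def]
    show (((m+4) - q.val) + p.val) % (m+4) = 1 ↔ _
    by_cases h : q.val ≤ p.val
    · have e : ((m+4) - q.val) + p.val = (p.val - q.val) + (m+4) := by omega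
      rw [e, Nat.add_mod_right, Nat.mod_eq_of_lt (by omega)]
      omega
    · have e : ((m+4) - q.val) + p.val = (m+4) - (q.val - p.val) := by omega
      rw [e, Nat.mod_eq_of_lt (by omega)]
      omega
  have hC3 : ∀ p q : Fin (m+3), ((p - q).val = 1 ↔ (p.val = q.val + 1 ∨ (q.val = m+2 ∧ p.val = 0))) := by
    intro p q
    have hp := p.isLt
    have hq := q.isLt
    rw [Fin.sub_def]
    show (((m+3) - q.val) + p.val) % (m+3) = 1 ↔ _
    by_cases h : q.val ≤ p.val
    · have e : ((m+3) - q.val) + p.val = (p.val - q.val) + (m+3) := by omega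
      rw [e, Nat.add_mod_right, Nat.mod_eq_of_lt (by omega)]
      omega
    · have e : ((m+3) - q.val) + p.val = (m+3) - (q.val - p.val) := by omega
      rw [e, Nat.mod_eq_of_lt (by omega)]
      omega
  -- the key adjacency computation
  have key2 : ∀ (x y : ↥t) (hx : (x : V) = v) (hy : (y : V) ≠ v),
      ((cycleGraph (m+4)).Adj (f x) (f y) ↔ G.Adj ↑x ↑y) := by
    intro x y hx hy
    rw [hfv x hx, hfn y hy]
    set y' : ↥s := ⟨⟨(y : V), hy⟩, mem_of y hy⟩ with hy'
    have hyval : (y : V) = ↑↑y' := rfl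
    have hq := (χ y').isLt
    have lhs : (cycleGraph (m+4)).Adj (Fin.last (m+3)) (Fin.castSucc (χ y')) ↔
        ((χ y').val = m+2 ∨ (χ y').val = 0) := by
      rw [cycleGraph_adj', hD, hE]
    rw [lhs, hx, hyval, ha', h0]
    constructor
    · rintro (h | h) <;> rw [h]
      · exact hva
      · exact he.symm
    · intro h
      by_cases hy0 : y' = u0
      · exact Or.inr hy0
      · exact Or.inl ((hGv y' hy0).mp h)
  have key3 : ∀ (x y : ↥t) (hx : (x : V) ≠ v) (hy : (y : V) ≠ v),
      ((cycleGraph (m+4)).Adj (f x) (f y) ↔ G.Adj ↑x ↑y) := by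
    intro x y hx hy
    rw [hfn x hx, hfn y hy]
    set x' : ↥s := ⟨⟨(x : V), hx⟩, mem_of x hx⟩ with hx'
    set y' : ↥s := ⟨⟨(y : V), hy⟩, mem_of y hy⟩ with hy'
    have hxval : (x : V) = ↑↑x' := rfl
    have hyval : (y : V) = ↑↑y' := rfl
    have hp := (χ x').isLt
    have hq := (χ y').isLt
    have lhs : (cycleGraph (m+4)).Adj (Fin.castSucc (χ x')) (Fin.castSucc (χ y')) ↔
        ((χ x').val + 1 = (χ y').val ∨ (χ y').val + 1 = (χ x').val) := by
      rw [cycleGraph_adj', hC, hC]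
      omega
    rw [lhs, hxval, hyval]
    by_cases hx0 : x' = u0 <;> by_cases hy0 : y' = u0
    · have hxy : x' = y' := hx0.trans hy0.symm
      have hp0 : (χ x').val = 0 := (h0 x').mpr hx0
      have hq0 : (χ y').val = 0 := (h0 y').mpr hy0
      constructor
      · intro h; omega
      · intro h
        exact absurd (congrArg (fun z : ↥s => ((z : {w : V // w ≠ v}) : V)) hxy) h.ne
    · have hp0 : (χ x').val = 0 := (h0 x').mpr hx0
      have hbq := hb' y'
      have hrhs : G.Adj ↑↑x' ↑↑y' ↔ y' = b := by
        rw [show ((x' : {z : V // z ≠ v}) : V) = u from congrArg (fun z : ↥s => ((z : {w : V // w ≠ v}) : V)) hx0]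
        exact hGu y' hy0
      rw [hrhs, ← hbq]
      omega
    · have hq0 : (χ y').val = 0 := (h0 y').mpr hy0
      have hbp := hb' x'
      have hrhs : G.Adj ↑↑x' ↑↑y' ↔ x' = b := by
        rw [show ((y' : {z : V // z ≠ v}) : V) = u from congrArg (fun z : ↥s => ((z : {w : V // w ≠ v}) : V)) hy0]
        rw [SimpleGraph.adj_comm]
        exact hGu x' hx0
      rw [hrhs, ← hbp]
      omega
    · have hp0 : (χ x').val ≠ 0 := fun h => hx0 ((h0 x').mp h)
      have hq0 : (χ y').val ≠ 0 := fun h => hy0 ((h0 y').mp h)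
      have hrhs : G.Adj ↑↑x' ↑↑y' ↔ (cycleGraph (m+3)).Adj (χ x') (χ y') := by
        rw [← adj_of_ne he (hne_u0 x' hx0) (hne_u0 y' hy0)]
        exact hHadj x' y'
      rw [hrhs, cycleGraph_adj', hC3, hC3]
      omega
  refine ⟨t, ⟨m+4, by omega, ⟨RelIso.mk (Equiv.ofBijective f hf) ?_⟩⟩, ?_⟩
  · intro x y
    show (cycleGraph (m+4)).Adj (f x) (f y) ↔ G.Adj ↑x ↑y
    by_cases hx : (x : V) = v <;> by_cases hy : (y : V) = v
    · constructor
      · intro h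
        exact absurd ((hfv x hx).trans (hfv y hy).symm) h.ne
      · intro h
        exact absurd (hx.trans hy.symm) h.ne
    · exact key2 x y hx hy
    · have := key2 y x hy hx
      exact ⟨fun h => (this.mp h.symm).symm, fun h => (this.mpr h.symm).symm⟩
    · exact key3 x y hx hy
  · ext w
    constructor
    · rintro ⟨x, hx, rfl⟩
      rcases hx with ⟨w', hw', rfl⟩ | hx
      · rw [contractMap, dif_neg w'.2]; exact hw'
      · rcases hx with rfl
        rw [contractMap, dif_pos rfl]; exact hus
    · intro hw
      exact ⟨↑w, Or.inl ⟨w, hw, rfl⟩, by rw [contractMap, dif_neg w.2]⟩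
theorem stmt10 {V : Type*} [Fintype V] [DecidableEq V] (G : SimpleGraph V)
    (hconn : G.Connected) (u v : V) (he : G.Adj u v) :
    ∃ ψ : (G.contractPair u v).inducedCycles → G.inducedCycles,
      Function.Injective ψ ∧
      ∀ C : (G.contractPair u v).inducedCycles,
        contractMap he.ne '' ((ψ C : Set V)) = (C : Set {x : V // x ≠ v}) := by
  classical
  have key : ∀ s : Set {x : V // x ≠ v}, (G.contractPair u v).IsInducedCycle s →
      ∃ t, G.IsInducedCycle t ∧ contractMap he.ne '' t = s := by
    intro s hs
    obtain ⟨n, hn, ⟨φ0⟩⟩ := hs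
    obtain ⟨m, rfl⟩ : ∃ m, n = m + 3 := ⟨n - 3, by omega⟩
    have hcyc : (G.contractPair u v).IsInducedCycle s := ⟨m+3, by omega, ⟨φ0⟩⟩
    by_cases hus : (⟨u, he.ne⟩ : {x : V // x ≠ v}) ∈ s
    · set u0 : ↥s := ⟨⟨u, he.ne⟩, hus⟩ with hu0def
      set c : Fin (m+3) := φ0 u0 with hcdef
      set a0 : ↥s := φ0.symm (c - 1) with ha0def
      set b0 : ↥s := φ0.symm (c + 1) with hb0def
      have hφa0 : φ0 a0 = c - 1 := by rw [ha0def]; exact φ0.apply_symm_apply _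
      have hφb0 : φ0 b0 = c + 1 := by rw [hb0def]; exact φ0.apply_symm_apply _
      have hN : ∀ y : ↥s, (G.contractPair u v).Adj ⟨u, he.ne⟩ ↑y ↔ (y = a0 ∨ y = b0) := by
        intro y
        rw [ha0def, hb0def, hcdef]
        exact nbr_iff φ0 u0 y
      have hadja : (G.contractPair u v).Adj ⟨u, he.ne⟩ ↑a0 := (hN a0).mpr (Or.inl rfl)
      have hadjb : (G.contractPair u v).Adj ⟨u, he.ne⟩ ↑b0 := (hN b0).mpr (Or.inr rfl)
      have hA : G.Adj u ↑↑a0 ∨ G.Adj v ↑↑a0 := ((adj_u he).mp hadja).2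
      have hB : G.Adj u ↑↑b0 ∨ G.Adj v ↑↑b0 := ((adj_u he).mp hadjb).2
      have hne_u0 : ∀ y : ↥s, y ≠ u0 → ((y : {z : V // z ≠ v}) : V) ≠ u :=
        fun y h hc => h (Subtype.ext (Subtype.ext hc))
      by_cases hua : G.Adj u ↑↑a0 <;> by_cases hub : G.Adj u ↑↑b0
      · -- both neighbors joined to u: same vertex set works
        apply caseSame he s hcyc
        have hAdjU : ∀ y : ↥s, (G.contractPair u v).Adj ↑u0 ↑y ↔ G.Adj u ↑↑y := by
          intro y
          constructor
          · intro h
            rcases (hN y).mp h with h' | h' <;> rw [h']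
            · exact hua
            · exact hub
          · intro h
            exact (adj_u he).mpr ⟨h.ne, Or.inl h⟩
        intro x y
        by_cases hx0 : x = u0 <;> by_cases hy0 : y = u0
        · rw [hx0, hy0]
          constructor <;> intro h <;> exact absurd rfl h.ne
        · rw [hx0]; exact hAdjU y
        · rw [hy0]
          have := hAdjU x
          exact ⟨fun h => (this.mp h.symm).symm, fun h => (this.mpr h.symm).symm⟩
        · exact adj_of_ne he (hne_u0 x hx0) (hne_u0 y hy0)
      · -- a0 joined to u, b0 not (so b0 joined to v)
        have hvb : G.Adj v ↑↑b0 := hB.resolve_left hub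
        by_cases hva : G.Adj v ↑↑a0
        · refine caseII he s hcyc hus (fun y h => ?_)
          rcases (hN y).mp h with h' | h' <;> rw [h']
          · exact hva
          · exact hvb
        · -- subdivide: b0 is the v-neighbor, a0 the u-neighbor; reflect
          set χ : (SimpleGraph.induce s (G.contractPair u v)) ≃g cycleGraph (m+3) :=
            φ0.trans (reflIso c) with hχdef
          have hχapp : ∀ y : ↥s, χ y = c - φ0 y := fun y => rfl
          refine caseIII he s m hus χ b0 a0 ?_ ?_ ?_ hvb hub hua hva
          · rw [hχapp, ← hcdef, sub_self]
          · rw [hχapp, hφb0]; abel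
          · rw [hχapp, hφa0]; abel
      · -- b0 joined to u, a0 not (so a0 joined to v)
        have hva : G.Adj v ↑↑a0 := hA.resolve_left hua
        by_cases hvb : G.Adj v ↑↑b0
        · refine caseII he s hcyc hus (fun y h => ?_)
          rcases (hN y).mp h with h' | h' <;> rw [h']
          · exact hva
          · exact hvb
        · set χ : (SimpleGraph.induce s (G.contractPair u v)) ≃g cycleGraph (m+3) :=
            φ0.trans (rotIso c) with hχdef
          have hχapp : ∀ y : ↥s, χ y = φ0 y - c := fun y => rfl
          refine caseIII he s m hus χ a0 b0 ?_ ?_ ?_ hva hua hub hvb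
          · rw [hχapp, ← hcdef, sub_self]
          · rw [hχapp, hφa0]; abel
          · rw [hχapp, hφb0]; abel
      · -- neither joined to u: both joined to v
        have hva : G.Adj v ↑↑a0 := hA.resolve_left hua
        have hvb : G.Adj v ↑↑b0 := hB.resolve_left hub
        refine caseII he s hcyc hus (fun y h => ?_)
        rcases (hN y).mp h with h' | h' <;> rw [h']
        · exact hva
        · exact hvb
    · -- u not on the cycle
      apply caseSame he s hcyc
      have hxu : ∀ x : ↥s, ((x : {z : V // z ≠ v}) : V) ≠ u := by
        intro x hc
        have h1 : (x : {z : V // z ≠ v}) = ⟨u, he.ne⟩ := Subtype.ext hc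
        exact hus (h1 ▸ x.2)
      intro x y
      exact adj_of_ne he (hxu x) (hxu y)
  refine ⟨fun C => ⟨(key C.1 C.2).choose, (key C.1 C.2).choose_spec.1⟩, ?_,
    fun C => (key C.1 C.2).choose_spec.2⟩
  intro C1 C2 h
  have h1 := (key C1.1 C1.2).choose_spec.2
  have h2 := (key C2.1 C2.2).choose_spec.2
  apply Subtype.ext
  rw [← h1, ← h2, show (key C1.1 C1.2).choose = (key C2.1 C2.2).choose from
    congrArg Subtype.val h]
end

section
/- Let G be a connected simple graph with an edge e, and let β²(H) := |C(H)| − |E(H)| + |V(H)| where C(H) is the set of induced cycles of H. Then β²(G/e) ≤ β²(G). -/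
open SimpleGraph

/-! ### Cycle representation machinery -/

def natCyc (n i j : ℕ) : Prop :=
  j = i + 1 ∨ i = j + 1 ∨ (i + 1 = n ∧ j = 0) ∨ (j + 1 = n ∧ i = 0)

lemma sub_val_one {m : ℕ} (a b : Fin (m+3)) :
    ((a - b : Fin (m+3)) : ℕ) = 1 ↔
      ((b:ℕ) + 1 = m + 3 ∧ (a:ℕ) = 0) ∨ ((b:ℕ) + 1 < m + 3 ∧ (a:ℕ) = (b:ℕ) + 1) := by
  have h1 : ((a - b : Fin (m+3)) : ℕ) = 1 ↔ a - b = 1 := by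
    rw [Fin.ext_iff, Fin.val_one]
  have h2 : a - b = 1 ↔ a = b + 1 := sub_eq_iff_eq_add'
  have h3 : a = b + 1 ↔ (a:ℕ) = ((b:ℕ) + ((1 : Fin (m+3)):ℕ)) % (m+3) := by
    rw [Fin.ext_iff, Fin.val_add]
  rw [h1, h2, h3, Fin.val_one]
  have hb := b.isLt
  rcases Nat.lt_or_ge ((b:ℕ)+1) (m+3) with h | h
  · rw [Nat.mod_eq_of_lt h]; omega
  · have : (b:ℕ) + 1 = m + 3 := by omega
    rw [this, Nat.mod_self]; omega

lemma cycleGraph_adj_natCyc {m : ℕ} {i j : Fin (m+3)} :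
    (cycleGraph (m+3)).Adj i j ↔ natCyc (m+3) (i:ℕ) (j:ℕ) := by
  rw [cycleGraph_adj', sub_val_one, sub_val_one, natCyc]
  have hi := i.isLt; have hj := j.isLt
  omega

lemma natCyc_shift {m : ℕ} (c i j : Fin (m+3)) :
    natCyc (m+3) ((c + i : Fin (m+3)) : ℕ) ((c + j : Fin (m+3)) : ℕ) ↔
      natCyc (m+3) (i:ℕ) (j:ℕ) := by
  rw [← cycleGraph_adj_natCyc, ← cycleGraph_adj_natCyc, cycleGraph_adj', cycleGraph_adj',
    add_sub_add_left_eq_sub, add_sub_add_left_eq_sub]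

lemma natCyc_neg {m : ℕ} (i j : Fin (m+3)) :
    natCyc (m+3) ((-i : Fin (m+3)) : ℕ) ((-j : Fin (m+3)) : ℕ) ↔
      natCyc (m+3) (i:ℕ) (j:ℕ) := by
  rw [← cycleGraph_adj_natCyc, ← cycleGraph_adj_natCyc, cycleGraph_adj', cycleGraph_adj',
    neg_sub_neg, neg_sub_neg, or_comm]

lemma mem_inducedCycles_iff {α : Type*} (H : SimpleGraph α) (s : Set α) :
    s ∈ H.inducedCycles ↔
      ∃ m, ∃ f : Fin (m+3) ≃ s,
        ∀ i j, H.Adj (f i : α) (f j : α) ↔ natCyc (m+3) (i:ℕ) (j:ℕ) := by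
  constructor
  · rintro ⟨n, hn, ⟨φ⟩⟩
    obtain ⟨m, rfl⟩ : ∃ m, n = m + 3 := ⟨n - 3, by omega⟩
    refine ⟨m, φ.symm.toEquiv, fun i j => ?_⟩
    rw [← cycleGraph_adj_natCyc]
    exact φ.symm.map_adj_iff
  · rintro ⟨m, f, hf⟩
    refine ⟨m+3, by omega, ⟨RelIso.mk f.symm fun {a b} => ?_⟩⟩
    rw [cycleGraph_adj_natCyc, ← hf]
    simp [comap_adj]

lemma inducedCycles_map {α β : Type*} {H : SimpleGraph α} {K : SimpleGraph β} (g : α → β)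
    (hg : Function.Injective g) {S : Set α}
    (hadj : ∀ x y, x ∈ S → y ∈ S → (H.Adj x y ↔ K.Adj (g x) (g y)))
    (hS : S ∈ H.inducedCycles) : g '' S ∈ K.inducedCycles := by
  rw [mem_inducedCycles_iff] at *
  obtain ⟨m, f, hf⟩ := hS
  refine ⟨m, f.trans (Equiv.Set.image g S hg), fun i j => ?_⟩
  simp only [Equiv.trans_apply, Equiv.Set.image_apply]
  rw [← hadj _ _ (f i).2 (f j).2, hf]

lemma cyc_rotate {α : Type*} (A : α → α → Prop) {m : ℕ} (f : Fin (m+3) ≃ α)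
    (hf : ∀ i j, A (f i) (f j) ↔ natCyc (m+3) (i:ℕ) (j:ℕ)) (w : α) :
    ∃ g : Fin (m+3) ≃ α,
      (∀ i j, A (g i) (g j) ↔ natCyc (m+3) (i:ℕ) (j:ℕ)) ∧ g 0 = w := by
  refine ⟨(Equiv.addLeft (f.symm w)).trans f, fun i j => ?_, by simp⟩
  simp only [Equiv.trans_apply, Equiv.coe_addLeft]
  rw [hf, natCyc_shift]

lemma cyc_reflect {α : Type*} (A : α → α → Prop) {m : ℕ} (f : Fin (m+3) ≃ α)
    (hf : ∀ i j, A (f i) (f j) ↔ natCyc (m+3) (i:ℕ) (j:ℕ)) :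
    ∃ g : Fin (m+3) ≃ α,
      (∀ i j, A (g i) (g j) ↔ natCyc (m+3) (i:ℕ) (j:ℕ)) ∧
      g 0 = f 0 ∧ g 1 = f (-1) ∧ g (-1) = f 1 := by
  refine ⟨(Equiv.neg _).trans f, fun i j => ?_, by simp, by simp, by simp⟩
  simp only [Equiv.trans_apply, Equiv.neg_apply]
  rw [hf, natCyc_neg]

/-! ### Maps between `V` and `{x // x ≠ v}` -/

section Maps

variable {V : Type*} {G : SimpleGraph V} {u v : V}

open scoped Classical in
noncomputable def g1fun (u v : V) : {x : V // x ≠ v} → V :=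
  fun x => if (x : V) = u then v else ↑x

open scoped Classical in
noncomputable def rhoFun (u v : V) (hne : u ≠ v) : V → {x : V // x ≠ v} :=
  fun a => if h : a = v then ⟨u, hne⟩ else ⟨a, h⟩

lemma rho_val (hne : u ≠ v) (x : {x : V // x ≠ v}) : rhoFun u v hne ↑x = x := by
  unfold rhoFun
  rw [dif_neg x.2]

lemma rho_g1 (hne : u ≠ v) (x : {x : V // x ≠ v}) : rhoFun u v hne (g1fun u v x) = x := by
  unfold rhoFun g1fun
  by_cases hx : (x : V) = u
  · rw [if_pos hx, dif_pos rfl]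
    exact Subtype.ext hx.symm
  · rw [if_neg hx, dif_neg x.2]

lemma g1_injective (hne : u ≠ v) : Function.Injective (g1fun u v) := by
  intro x y h
  have := congrArg (rhoFun u v hne) h
  rwa [rho_g1, rho_g1] at this

lemma u_notMem_g1_image (hne : u ≠ v) (S : Set {x : V // x ≠ v}) : u ∉ g1fun u v '' S := by
  rintro ⟨x, -, hx⟩
  unfold g1fun at hx
  split_ifs at hx with h
  · exact hne hx.symm
  · exact h hx

lemma v_notMem_val_image (S : Set {x : V // x ≠ v}) : v ∉ Subtype.val '' S := by
  rintro ⟨x, -, hx⟩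
  exact x.2 hx

lemma contractPair_adj_iff_of_ne_u {x y : {a : V // a ≠ v}}
    (hx : (x : V) ≠ u) (hy : (y : V) ≠ u) :
    (G.contractPair u v).Adj x y ↔ G.Adj (x : V) (y : V) := by
  constructor
  · rintro ⟨hne, h | ⟨h1, h2⟩ | ⟨h1, h2⟩⟩
    · exact h
    · exact absurd h1 hx
    · exact absurd h1 hy
  · intro h
    exact ⟨h.ne, Or.inl h⟩

end Maps

/-! ### The three cycle cases -/

section Cases

variable {V : Type*} {G : SimpleGraph V} {u v : V}

lemma caseI_adj (he : G.Adj u v) {S : Set {x : V // x ≠ v}}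
    (hcond : (⟨u, he.ne⟩ : {x : V // x ≠ v}) ∈ S →
      ∀ w ∈ S, (G.contractPair u v).Adj ⟨u, he.ne⟩ w → G.Adj u (w : V)) :
    ∀ x y, x ∈ S → y ∈ S →
      ((G.contractPair u v).Adj x y ↔ G.Adj (x : V) (y : V)) := by
  intro x y hx hy
  constructor
  · intro hadj
    have hadj' := hadj
    obtain ⟨hne, h | ⟨h1, h2⟩ | ⟨h1, h2⟩⟩ := hadj'
    · exact h
    · have hxu : x = ⟨u, he.ne⟩ := Subtype.ext h1
      have := hcond (hxu ▸ hx) y hy (by rwa [hxu] at hadj)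
      rwa [← h1] at this
    · have hyu : y = ⟨u, he.ne⟩ := Subtype.ext h1
      have := hcond (hyu ▸ hy) x hx (by rw [hyu] at hadj; exact hadj.symm)
      rw [← h1] at this
      exact this.symm
  · intro h
    exact ⟨h.ne, Or.inl h⟩

lemma caseII_adj (he : G.Adj u v) {S : Set {x : V // x ≠ v}}
    (hcond : ∀ w ∈ S, (G.contractPair u v).Adj ⟨u, he.ne⟩ w → G.Adj v (w : V)) :
    ∀ x y, x ∈ S → y ∈ S →
      ((G.contractPair u v).Adj x y ↔ G.Adj (g1fun u v x) (g1fun u v y)) := by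
  intro x y hx hy
  by_cases hxu : (x : V) = u <;> by_cases hyu : (y : V) = u
  · have hxy : x = y := Subtype.ext (hxu.trans hyu.symm)
    subst hxy
    constructor
    · intro h; exact absurd rfl h.1
    · intro h; exact (G.loopless.irrefl _ h).elim
  · have hxeq : x = ⟨u, he.ne⟩ := Subtype.ext hxu
    unfold g1fun
    rw [if_pos hxu, if_neg hyu]
    constructor
    · intro hadj; exact hcond y hy (hxeq ▸ hadj)
    · intro h
      refine ⟨?_, Or.inr (Or.inl ⟨hxu, h⟩)⟩
      rw [hxu]; exact fun hh => hyu hh.symm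
  · have hyeq : y = ⟨u, he.ne⟩ := Subtype.ext hyu
    unfold g1fun
    rw [if_neg hxu, if_pos hyu]
    constructor
    · intro hadj; exact (hcond x hx (hyeq ▸ hadj.symm)).symm
    · intro h
      refine ⟨?_, Or.inr (Or.inr ⟨hyu, h⟩)⟩
      rw [hyu]; exact hxu
  · unfold g1fun
    rw [if_neg hxu, if_neg hyu]
    exact contractPair_adj_iff_of_ne_u hxu hyu

lemma caseIII_core (he : G.Adj u v)
    {S : Set {x : V // x ≠ v}} {m : ℕ} (f : Fin (m+3) ≃ S)
    (hf : ∀ i j, (G.contractPair u v).Adj (f i) (f j) ↔ natCyc (m+3) (i:ℕ) (j:ℕ))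
    (hf0 : ((f 0 : {x : V // x ≠ v}) : V) = u)
    (hA : G.Adj u ((f 1 : {x : V // x ≠ v}) : V))
    (hnAv : ¬ G.Adj v ((f 1 : {x : V // x ≠ v}) : V))
    (hB : G.Adj v ((f (-1) : {x : V // x ≠ v}) : V))
    (hnBu : ¬ G.Adj u ((f (-1) : {x : V // x ≠ v}) : V)) :
    (Subtype.val '' S ∪ {v}) ∈ G.inducedCycles := by
  have hneg1 : ((-1 : Fin (m+3)) : ℕ) = m + 2 := by
    rw [Fin.coe_neg_one]
  have hfinj : ∀ i j : Fin (m+3),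
      ((f i : {x : V // x ≠ v}) : V) = ((f j : {x : V // x ≠ v}) : V) → i = j :=
    fun i j h => f.injective (Subtype.ext (Subtype.ext h))
  have hne_u : ∀ j : Fin (m+3), j ≠ 0 → ((f j : {x : V // x ≠ v}) : V) ≠ u :=
    fun j hj h => hj (hfinj j 0 (h.trans hf0.symm))
  have nbr : ∀ j : Fin (m+3),
      (G.contractPair u v).Adj (f 0) (f j) ↔ ((j:ℕ) = 1 ∨ (j:ℕ) = m+2) := by
    intro j
    rw [hf]
    simp only [Fin.val_zero]
    unfold natCyc
    have := j.isLt
    omega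
  have fact_u : ∀ (jn : ℕ) (hjn : jn < m+3), jn ≠ 0 →
      (G.Adj u ((f ⟨jn, hjn⟩ : {x : V // x ≠ v}) : V) ↔ jn = 1) := by
    intro jn hjn hjn0
    constructor
    · intro h
      have hadj : (G.contractPair u v).Adj (f 0) (f ⟨jn, hjn⟩) := by
        refine ⟨?_, Or.inl ?_⟩
        · rw [hf0]
          exact (hne_u ⟨jn, hjn⟩ (fun hh => hjn0 (congrArg Fin.val hh))).symm
        · rw [hf0]; exact h
      rcases (nbr ⟨jn, hjn⟩).1 hadj with h1 | h2
      · exact h1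
      · exfalso
        apply hnBu
        have hj : (⟨jn, hjn⟩ : Fin (m+3)) = -1 := Fin.ext (by rw [hneg1]; exact h2)
        rwa [← hj]
    · intro h
      have hj : (⟨jn, hjn⟩ : Fin (m+3)) = 1 := Fin.ext (by rw [Fin.val_one]; exact h)
      rw [hj]; exact hA
  have fact_v : ∀ (jn : ℕ) (hjn : jn < m+3),
      (G.Adj v ((f ⟨jn, hjn⟩ : {x : V // x ≠ v}) : V) ↔ (jn = 0 ∨ jn = m+2)) := by
    intro jn hjn
    constructor
    · intro h
      by_cases hj0 : jn = 0
      · exact Or.inl hj0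
      · have hadj : (G.contractPair u v).Adj (f 0) (f ⟨jn, hjn⟩) := by
          refine ⟨?_, Or.inr (Or.inl ⟨hf0, h⟩)⟩
          rw [hf0]
          exact (hne_u ⟨jn, hjn⟩ (fun hh => hj0 (congrArg Fin.val hh))).symm
        rcases (nbr ⟨jn, hjn⟩).1 hadj with h1 | h2
        · exfalso
          apply hnAv
          have hj : (⟨jn, hjn⟩ : Fin (m+3)) = 1 := Fin.ext (by rw [Fin.val_one]; exact h1)
          rwa [← hj]
        · exact Or.inr h2
    · rintro (h | h)
      · have hj : (⟨jn, hjn⟩ : Fin (m+3)) = 0 := Fin.ext h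
        rw [hj, hf0]
        exact he.symm
      · have hj : (⟨jn, hjn⟩ : Fin (m+3)) = -1 := Fin.ext (by rw [hneg1]; exact h)
        rw [hj]; exact hB
  rw [mem_inducedCycles_iff]
  have hmem : ∀ i : Fin (m+1+3),
      (if h : (i:ℕ) < m+3 then ((f ⟨(i:ℕ), h⟩ : {x : V // x ≠ v}) : V) else v)
        ∈ Subtype.val '' S ∪ {v} := by
    intro i
    split
    · exact Or.inl ⟨_, (f _).2, rfl⟩
    · exact Or.inr rfl
  set T : Set V := Subtype.val '' S ∪ {v} with hT
  set h' : Fin (m+1+3) → T :=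
    fun i => ⟨if h : (i:ℕ) < m+3 then ((f ⟨(i:ℕ), h⟩ : {x : V // x ≠ v}) : V) else v,
      hmem i⟩ with hh'
  have hinj : Function.Injective h' := by
    intro i j hij
    rw [Subtype.mk.injEq] at hij
    split_ifs at hij with hi hj hj
    · have h2 := congrArg Fin.val (hfinj _ _ hij)
      exact Fin.ext h2
    · exact absurd hij ((f ⟨(i:ℕ), hi⟩).1).2
    · exact absurd hij.symm ((f ⟨(j:ℕ), hj⟩).1).2
    · have h1 := i.isLt
      have h2 := j.isLt
      exact Fin.ext (by omega)
  have hsurj : Function.Surjective h' := by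
    rintro ⟨x, hx⟩
    rcases hx with ⟨w, hwS, rfl⟩ | hx
    · set k := f.symm ⟨w, hwS⟩ with hk
      refine ⟨⟨(k:ℕ), by have := k.isLt; omega⟩, ?_⟩
      apply Subtype.ext
      show (if h : ((k:ℕ)) < m+3 then ((f ⟨(k:ℕ), h⟩ : {x : V // x ≠ v}) : V) else v) = ↑w
      rw [dif_pos k.isLt]
      have : (⟨(k:ℕ), k.isLt⟩ : Fin (m+3)) = k := Fin.ext rfl
      rw [this, hk, Equiv.apply_symm_apply]
    · refine ⟨⟨m+3, by omega⟩, ?_⟩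
      apply Subtype.ext
      show (if h : m+3 < m+3 then ((f ⟨m+3, h⟩ : {x : V // x ≠ v}) : V) else v) = x
      rw [dif_neg (by omega)]
      exact hx.symm
  refine ⟨m+1, Equiv.ofBijective h' ⟨hinj, hsurj⟩, fun i j => ?_⟩
  show G.Adj (if h : (i:ℕ) < m+3 then ((f ⟨(i:ℕ), h⟩ : {x : V // x ≠ v}) : V) else v)
      (if h : (j:ℕ) < m+3 then ((f ⟨(j:ℕ), h⟩ : {x : V // x ≠ v}) : V) else v)
      ↔ natCyc (m+1+3) (i:ℕ) (j:ℕ)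
  have hi4 := i.isLt
  have hj4 := j.isLt
  by_cases hi : (i:ℕ) < m+3 <;> by_cases hj : (j:ℕ) < m+3
  · rw [dif_pos hi, dif_pos hj]
    by_cases hi0 : (i:ℕ) = 0 <;> by_cases hj0 : (j:ℕ) = 0
    · have h1 : (⟨(i:ℕ), hi⟩ : Fin (m+3)) = ⟨(j:ℕ), hj⟩ :=
        Fin.ext (show (i:ℕ) = (j:ℕ) by omega)
      rw [h1]
      exact iff_of_false (G.loopless.irrefl _) (by unfold natCyc; omega)
    · have h1 : (⟨(i:ℕ), hi⟩ : Fin (m+3)) = 0 := Fin.ext hi0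
      rw [h1, hf0, fact_u (j:ℕ) hj hj0]
      unfold natCyc; omega
    · have h1 : (⟨(j:ℕ), hj⟩ : Fin (m+3)) = 0 := Fin.ext hj0
      rw [h1, hf0, G.adj_comm, fact_u (i:ℕ) hi hi0]
      unfold natCyc; omega
    · rw [← contractPair_adj_iff_of_ne_u
        (hne_u _ (fun hh => hi0 (congrArg Fin.val hh)))
        (hne_u _ (fun hh => hj0 (congrArg Fin.val hh))), hf]
      show natCyc (m+3) (i:ℕ) (j:ℕ) ↔ _
      unfold natCyc; omega
  · rw [dif_pos hi, dif_neg hj, G.adj_comm, fact_v (i:ℕ) hi]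
    unfold natCyc; omega
  · rw [dif_neg hi, dif_pos hj, fact_v (j:ℕ) hj]
    unfold natCyc; omega
  · rw [dif_neg hi, dif_neg hj]
    exact iff_of_false (G.loopless.irrefl _) (by unfold natCyc; omega)

end Cases

/-! ### Case III wrapper -/

section Wrapper

variable {V : Type*} {G : SimpleGraph V} {u v : V}

lemma caseIII_mem (he : G.Adj u v) {S : Set {x : V // x ≠ v}}
    (huS : (⟨u, he.ne⟩ : {x : V // x ≠ v}) ∈ S)
    (hS : S ∈ (G.contractPair u v).inducedCycles)
    (hnI : ¬ ∀ w ∈ S, (G.contractPair u v).Adj ⟨u, he.ne⟩ w → G.Adj u (w : V))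
    (hnII : ¬ ∀ w ∈ S, (G.contractPair u v).Adj ⟨u, he.ne⟩ w → G.Adj v (w : V)) :
    (Subtype.val '' S ∪ {v}) ∈ G.inducedCycles := by
  rw [mem_inducedCycles_iff] at hS
  obtain ⟨m, f0, hf0⟩ := hS
  obtain ⟨f, hf, hfz⟩ := cyc_rotate
    (fun (a b : S) => (G.contractPair u v).Adj ↑a ↑b) f0 hf0 ⟨⟨u, he.ne⟩, huS⟩
  have hf0v : ((f 0 : {x : V // x ≠ v}) : V) = u := by rw [hfz]
  push_neg at hnI hnII
  obtain ⟨w1, hw1S, hw1adj, hw1nu⟩ := hnI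
  obtain ⟨w2, hw2S, hw2adj, hw2nv⟩ := hnII
  have hw1v : G.Adj v (w1 : V) := by
    obtain ⟨hne_, h | ⟨h1, h2⟩ | ⟨h1, h2⟩⟩ := hw1adj
    · exact absurd h hw1nu
    · exact h2
    · exact absurd h1.symm hne_
  have hw2u : G.Adj u (w2 : V) := by
    obtain ⟨hne_, h | ⟨h1, h2⟩ | ⟨h1, h2⟩⟩ := hw2adj
    · exact h
    · exact absurd h2 hw2nv
    · exact absurd h1.symm hne_
  have nbr : ∀ (w) (hw : w ∈ S), (G.contractPair u v).Adj ⟨u, he.ne⟩ w →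
      (w = ↑(f 1) ∨ w = ↑(f (-1))) := by
    intro w hw hadj
    have hwk : (f (f.symm ⟨w, hw⟩) : {x : V // x ≠ v}) = w := by
      rw [Equiv.apply_symm_apply]
    have hadj' : (G.contractPair u v).Adj ↑(f 0) ↑(f (f.symm ⟨w, hw⟩)) := by
      rw [hfz, hwk]; exact hadj
    rw [hf] at hadj'
    set k := f.symm ⟨w, hw⟩ with hk
    have hkv : (k:ℕ) = 1 ∨ (k:ℕ) = m+2 := by
      have := k.isLt
      simp only [Fin.val_zero] at hadj'
      unfold natCyc at hadj'
      omega
    rcases hkv with h | h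
    · left
      have hke : k = 1 := Fin.ext (by rw [Fin.val_one]; exact h)
      rw [← hwk, hke]
    · right
      have hke : k = -1 := Fin.ext (by rw [Fin.coe_neg_one]; exact h)
      rw [← hwk, hke]
  have hw12 : w1 ≠ w2 := fun h => hw1nu (h ▸ hw2u)
  rcases nbr w1 hw1S hw1adj with h1 | h1 <;> rcases nbr w2 hw2S hw2adj with h2 | h2
  · exact absurd (h1.trans h2.symm) hw12
  · obtain ⟨g, hg, hg0, hg1, hgm⟩ := cyc_reflect
      (fun (a b : S) => (G.contractPair u v).Adj ↑a ↑b) f hf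
    refine caseIII_core he g hg ?_ ?_ ?_ ?_ ?_
    · rw [hg0, hfz]
    · rw [hg1, ← h2]; exact hw2u
    · rw [hg1, ← h2]; exact hw2nv
    · rw [hgm, ← h1]; exact hw1v
    · rw [hgm, ← h1]; exact hw1nu
  · refine caseIII_core he f hf hf0v ?_ ?_ ?_ ?_
    · rw [← h2]; exact hw2u
    · rw [← h2]; exact hw2nv
    · rw [← h1]; exact hw1v
    · rw [← h1]; exact hw1nu
  · exact absurd (h1.trans h2.symm) hw12

end Wrapper

/-! ### The cycle map and edge map -/

open scoped Classical in
noncomputable def Fcyc {V : Type*} (G : SimpleGraph V) {u v : V} (hne : u ≠ v) :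
    Set {x : V // x ≠ v} → Set V := fun S =>
  if (⟨u, hne⟩ : {x : V // x ≠ v}) ∈ S then
    (if ∀ w ∈ S, (G.contractPair u v).Adj ⟨u, hne⟩ w → G.Adj u (w : V) then
      Subtype.val '' S
     else if ∀ w ∈ S, (G.contractPair u v).Adj ⟨u, hne⟩ w → G.Adj v (w : V) then
      g1fun u v '' S
     else Subtype.val '' S ∪ {v})
  else Subtype.val '' S

section FcycLemmas

variable {V : Type*} {G : SimpleGraph V} {u v : V}

lemma rho_comp_val (hne : u ≠ v) :
    rhoFun u v hne ∘ (Subtype.val : {x : V // x ≠ v} → V) = id :=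
  funext fun x => rho_val hne x

lemma rho_comp_g1 (hne : u ≠ v) : rhoFun u v hne ∘ g1fun u v = id :=
  funext fun x => rho_g1 hne x

lemma Fcyc_retract (G : SimpleGraph V) (hne : u ≠ v) (S : Set {x : V // x ≠ v}) :
    rhoFun u v hne '' Fcyc G hne S = S := by
  have hval : rhoFun u v hne '' (Subtype.val '' S) = S := by
    rw [← Set.image_comp, rho_comp_val, Set.image_id]
  unfold Fcyc
  split_ifs with h1 h2 h3
  · exact hval
  · rw [← Set.image_comp, rho_comp_g1, Set.image_id]
  · rw [Set.image_union, hval, Set.image_singleton]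
    have hrv : rhoFun u v hne v = ⟨u, hne⟩ := dif_pos rfl
    rw [hrv]
    exact Set.union_eq_self_of_subset_right (Set.singleton_subset_iff.2 h1)
  · exact hval

lemma Fcyc_mapsTo (he : G.Adj u v) {S : Set {x : V // x ≠ v}}
    (hS : S ∈ (G.contractPair u v).inducedCycles) : Fcyc G he.ne S ∈ G.inducedCycles := by
  unfold Fcyc
  split_ifs with h1 h2 h3
  · exact inducedCycles_map _ Subtype.val_injective (caseI_adj he (fun _ => h2)) hS
  · exact inducedCycles_map _ (g1_injective he.ne) (caseII_adj he h3) hS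
  · exact caseIII_mem he h1 hS h2 h3
  · exact inducedCycles_map _ Subtype.val_injective (caseI_adj he (fun h => absurd h h1)) hS

end FcycLemmas

open scoped Classical in
noncomputable def Fedge {V : Type*} (G : SimpleGraph V) (u v : V) :
    Sym2 {x : V // x ≠ v} → Sym2 V := fun z =>
  if Sym2.map Subtype.val z ∈ G.edgeSet then Sym2.map Subtype.val z
  else Sym2.map (g1fun u v) z

section FedgeLemmas

variable {V : Type*} {G : SimpleGraph V} {u v : V}

lemma Fedge_mapsTo (he : G.Adj u v) (z : Sym2 {x : V // x ≠ v}) :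
    z ∈ (G.contractPair u v).edgeSet → Fedge G u v z ∈ G.edgeSet \ {s(u,v)} := by
  induction z using Sym2.ind with
  | _ x y =>
    intro hz
    rw [mem_edgeSet] at hz
    obtain ⟨hne, hor⟩ := hz
    unfold Fedge
    rw [Sym2.map_pair_eq, Sym2.map_pair_eq]
    split_ifs with h
    · refine ⟨h, fun hmem => ?_⟩
      rw [Set.mem_singleton_iff] at hmem
      have hv : v ∈ (s((x:V), (y:V)) : Sym2 V) := by
        rw [hmem]; exact Sym2.mem_mk_right u v
      rcases Sym2.mem_iff.1 hv with hh | hh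
      · exact x.2 hh.symm
      · exact y.2 hh.symm
    · rcases hor with hor | ⟨h1, h2⟩ | ⟨h1, h2⟩
      · exact absurd ((mem_edgeSet _).2 hor) h
      · have hyu : (y : V) ≠ u := fun hh => hne (h1.trans hh.symm)
        have hgx : g1fun u v x = v := if_pos h1
        have hgy : g1fun u v y = ↑y := if_neg hyu
        rw [hgx, hgy]
        refine ⟨(mem_edgeSet _).2 h2, fun hmem => ?_⟩
        rw [Set.mem_singleton_iff] at hmem
        have hu : u ∈ (s(v, (y:V)) : Sym2 V) := by
          rw [hmem]; exact Sym2.mem_mk_left u v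
        rcases Sym2.mem_iff.1 hu with hh | hh
        · exact he.ne hh
        · exact hyu hh.symm
      · have hxu : (x : V) ≠ u := fun hh => hne (hh.trans h1.symm)
        have hgx : g1fun u v x = ↑x := if_neg hxu
        have hgy : g1fun u v y = v := if_pos h1
        rw [hgx, hgy]
        refine ⟨(mem_edgeSet _).2 h2, fun hmem => ?_⟩
        rw [Set.mem_singleton_iff] at hmem
        have hu : u ∈ (s((x:V), v) : Sym2 V) := by
          rw [hmem]; exact Sym2.mem_mk_left u v
        rcases Sym2.mem_iff.1 hu with hh | hh
        · exact hxu hh.symm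
        · exact he.ne hh

lemma Fedge_retract (he : G.Adj u v) (z : Sym2 {x : V // x ≠ v}) :
    Sym2.map (rhoFun u v he.ne) (Fedge G u v z) = z := by
  induction z using Sym2.ind with
  | _ x y =>
    unfold Fedge
    rw [Sym2.map_pair_eq]
    split_ifs with h
    · simp [Sym2.map_pair_eq, rho_val]
    · simp [Sym2.map_pair_eq, rho_g1]

end FedgeLemmas

/-! ### Triangles at the contracted edge, and counting -/

section Triangles

variable {V : Type*} {G : SimpleGraph V} {u v : V}

lemma rho_of_ne (hne : u ≠ v) {a : V} (h : a ≠ v) : rhoFun u v hne a = ⟨a, h⟩ :=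
  dif_neg h

lemma rho_v (hne : u ≠ v) : rhoFun u v hne v = ⟨u, hne⟩ := dif_pos rfl

lemma rho_eq_rho (hne : u ≠ v) {a b : V} (h : rhoFun u v hne a = rhoFun u v hne b) :
    a = b ∨ (a = u ∧ b = v) ∨ (a = v ∧ b = u) := by
  by_cases ha : a = v <;> by_cases hb : b = v
  · exact Or.inl (ha.trans hb.symm)
  · rw [ha, rho_v, rho_of_ne hne hb] at h
    exact Or.inr (Or.inr ⟨ha, (congrArg Subtype.val h).symm⟩)
  · rw [hb, rho_v, rho_of_ne hne ha] at h
    exact Or.inr (Or.inl ⟨congrArg Subtype.val h, hb⟩)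
  · rw [rho_of_ne hne ha, rho_of_ne hne hb] at h
    exact Or.inl (congrArg Subtype.val h)

lemma triangle_mem (he : G.Adj u v) {a : V} (ha : G.Adj u a) (hb : G.Adj v a) :
    ({u, v, a} : Set V) ∈ G.inducedCycles := by
  classical
  rw [mem_inducedCycles_iff]
  have hu : u ∈ ({u, v, a} : Set V) := by simp
  have hv : v ∈ ({u, v, a} : Set V) := by simp
  have hain : a ∈ ({u, v, a} : Set V) := by simp
  set k : Fin 3 → ({u, v, a} : Set V) := fun i =>
    if (i:ℕ) = 0 then ⟨u, hu⟩ else if (i:ℕ) = 1 then ⟨v, hv⟩ else ⟨a, hain⟩ with hk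
  have hk0 : k 0 = ⟨u, hu⟩ := rfl
  have hk1 : k 1 = ⟨v, hv⟩ := rfl
  have hk2 : k 2 = ⟨a, hain⟩ := rfl
  have hinj : Function.Injective k := by
    intro i j hij
    fin_cases i <;> fin_cases j <;>
      simp_all [hk0, hk1, hk2, he.ne, ha.ne, hb.ne, he.ne', ha.ne', hb.ne']
  have hsurj : Function.Surjective k := by
    rintro ⟨x, hx⟩
    rcases hx with rfl | rfl | rfl
    · exact ⟨0, rfl⟩
    · exact ⟨1, rfl⟩
    · exact ⟨2, rfl⟩
  refine ⟨0, Equiv.ofBijective k ⟨hinj, hsurj⟩, fun i j => ?_⟩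
  fin_cases i <;> fin_cases j <;>
    simp only [Equiv.ofBijective_apply, hk0, hk1, hk2] <;>
    first
      | exact iff_of_false (G.loopless.irrefl _) (by unfold natCyc; omega)
      | exact iff_of_true he (by unfold natCyc; omega)
      | exact iff_of_true he.symm (by unfold natCyc; omega)
      | exact iff_of_true ha (by unfold natCyc; omega)
      | exact iff_of_true ha.symm (by unfold natCyc; omega)
      | exact iff_of_true hb (by unfold natCyc; omega)
      | exact iff_of_true hb.symm (by unfold natCyc; omega)

lemma cycle_three_le_ncard {α : Type*} {H : SimpleGraph α} {S : Set α}
    (hS : S ∈ H.inducedCycles) : 3 ≤ S.ncard := by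
  rw [mem_inducedCycles_iff] at hS
  obtain ⟨m, f, -⟩ := hS
  have : Nat.card S = m + 3 := by
    rw [Nat.card_congr f.symm]
    simp
  rw [← Nat.card_coe_set_eq, this]
  omega

end Triangles

theorem stmt11 {V : Type*} [Fintype V] (G : SimpleGraph V) (hconn : G.Connected)
    (u v : V) (he : G.Adj u v) :
    ((G.contractPair u v).inducedCycles.ncard : ℤ)
        - ((G.contractPair u v).edgeSet.ncard : ℤ)
        + (Nat.card {x : V // x ≠ v} : ℤ)
      ≤ (G.inducedCycles.ncard : ℤ) - (G.edgeSet.ncard : ℤ) + (Nat.card V : ℤ) := by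
  classical
  set T : Set V := {a | G.Adj u a ∧ G.Adj v a} with hTdef
  -- vertex count
  have hV : Nat.card {x : V // x ≠ v} + 1 = Nat.card V := by
    have e1 : {x : V // x ≠ v} ≃ (({v}ᶜ : Set V) : Type _) :=
      Equiv.subtypeEquivRight (fun x => by simp)
    rw [Nat.card_congr e1, Nat.card_coe_set_eq]
    have h3 := Set.ncard_add_ncard_compl ({v} : Set V)
    rw [Set.ncard_singleton] at h3
    omega
  -- edge count
  set Q : Set (Sym2 V) := (fun a => s(a, v)) '' T with hQdef
  set P : Set (Sym2 V) := (G.edgeSet \ {s(u,v)}) \ Q with hPdef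
  have hE : G.edgeSet.ncard ≤ (G.contractPair u v).edgeSet.ncard + T.ncard + 1 := by
    have hsub : G.edgeSet ⊆ P ∪ Q ∪ {s(u,v)} := by
      intro z hz
      by_cases h2 : z = s(u,v)
      · exact Or.inr h2
      by_cases h1 : z ∈ Q
      · exact Or.inl (Or.inr h1)
      · exact Or.inl (Or.inl ⟨⟨hz, h2⟩, h1⟩)
    have h1 : G.edgeSet.ncard ≤ (P ∪ Q ∪ {s(u,v)}).ncard :=
      Set.ncard_le_ncard hsub (Set.toFinite _)
    have h2 : (P ∪ Q ∪ {s(u,v)}).ncard ≤ (P ∪ Q).ncard + 1 := by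
      have := Set.ncard_union_le (P ∪ Q) ({s(u,v)} : Set (Sym2 V))
      rwa [Set.ncard_singleton] at this
    have h3 : (P ∪ Q).ncard ≤ P.ncard + Q.ncard := Set.ncard_union_le _ _
    have h4 : Q.ncard ≤ T.ncard := Set.ncard_image_le (Set.toFinite _)
    have h5 : P.ncard ≤ (G.contractPair u v).edgeSet.ncard := by
      apply Set.ncard_le_ncard_of_injOn (Sym2.map (rhoFun u v he.ne))
      · -- maps to
        intro z hz
        induction z using Sym2.ind with
        | _ a b =>
          obtain ⟨⟨hzE, hze⟩, hzQ⟩ := hz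
          have hadj : G.Adj a b := (mem_edgeSet _).1 hzE
          rw [Sym2.map_pair_eq, mem_edgeSet]
          by_cases hav : a = v <;> by_cases hbv : b = v
          · exact absurd (hav.trans hbv.symm) hadj.ne
          · subst hav
            have hbu : b ≠ u := by
              intro hbu
              subst hbu
              exact hze (Sym2.eq_swap)
            rw [rho_v, rho_of_ne he.ne hbv]
            exact ⟨fun hh => hbu hh.symm, Or.inr (Or.inl ⟨rfl, hadj⟩)⟩
          · subst hbv
            have hau : a ≠ u := by
              intro hau
              subst hau
              exact hze rfl
            rw [rho_v, rho_of_ne he.ne hav]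
            exact ⟨hau, Or.inr (Or.inr ⟨rfl, hadj⟩)⟩
          · rw [rho_of_ne he.ne hav, rho_of_ne he.ne hbv]
            exact ⟨hadj.ne, Or.inl hadj⟩
      · -- injective on P
        have key : ∀ a b c d : V, G.Adj a b → G.Adj c d →
            s(a,b) ≠ s(u,v) → s(a,b) ∉ Q → s(c,d) ∉ Q →
            rhoFun u v he.ne a = rhoFun u v he.ne c →
            rhoFun u v he.ne b = rhoFun u v he.ne d → s(a,b) = s(c,d) := by
          intro a b c d hab hcd hne1 hQ1 hQ2 h1 h2
          rcases rho_eq_rho he.ne h1 with rfl | ⟨rfl, rfl⟩ | ⟨rfl, rfl⟩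
          · rcases rho_eq_rho he.ne h2 with rfl | ⟨rfl, rfl⟩ | ⟨rfl, rfl⟩
            · rfl
            · exact absurd ⟨a, ⟨hab.symm, hcd.symm⟩, rfl⟩ hQ2
            · exact absurd ⟨a, ⟨hcd.symm, hab.symm⟩, rfl⟩ hQ1
          · rcases rho_eq_rho he.ne h2 with rfl | ⟨rfl, rfl⟩ | ⟨rfl, rfl⟩
            · exact absurd ⟨b, ⟨hab, hcd⟩, Sym2.eq_swap⟩ hQ2
            · exact absurd rfl hab.ne
            · exact absurd rfl hne1
          · rcases rho_eq_rho he.ne h2 with rfl | ⟨rfl, rfl⟩ | ⟨rfl, rfl⟩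
            · exact absurd ⟨b, ⟨hcd, hab⟩, Sym2.eq_swap⟩ hQ1
            · exact absurd Sym2.eq_swap hne1
            · exact absurd rfl hab.ne
        intro z1 hz1 z2 hz2 h12
        induction z1 using Sym2.ind with
        | _ a b =>
          induction z2 using Sym2.ind with
          | _ c d =>
            obtain ⟨⟨hE1, hne1⟩, hQ1⟩ := hz1
            obtain ⟨⟨hE2, hne2⟩, hQ2⟩ := hz2
            rw [Sym2.map_pair_eq, Sym2.map_pair_eq] at h12
            rcases Sym2.eq_iff.1 h12 with ⟨h1, h2⟩ | ⟨h1, h2⟩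
            · exact key a b c d ((mem_edgeSet _).1 hE1) ((mem_edgeSet _).1 hE2)
                hne1 hQ1 hQ2 h1 h2
            · have := key a b d c ((mem_edgeSet _).1 hE1)
                ((mem_edgeSet _).1 hE2).symm hne1 hQ1
                (by rwa [show (s(d,c) : Sym2 V) = s(c,d) from Sym2.eq_swap]) h1 h2
              rw [this]
              exact Sym2.eq_swap
    omega
  -- cycle count
  have hC : (G.contractPair u v).inducedCycles.ncard + T.ncard ≤ G.inducedCycles.ncard := by
    set I1 : Set (Set V) := Fcyc G he.ne '' (G.contractPair u v).inducedCycles with hI1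
    set I2 : Set (Set V) := (fun a => ({u, v, a} : Set V)) '' T with hI2
    have hsub : I1 ∪ I2 ⊆ G.inducedCycles := by
      rintro s (⟨S, hS, rfl⟩ | ⟨a, ha, rfl⟩)
      · exact Fcyc_mapsTo he hS
      · exact triangle_mem he ha.1 ha.2
    have hcard1 : I1.ncard = (G.contractPair u v).inducedCycles.ncard := by
      apply Set.ncard_image_of_injOn
      intro S hS S' hS' h
      rw [← Fcyc_retract G he.ne S, h, Fcyc_retract]
    have hcard2 : I2.ncard = T.ncard := by
      apply Set.ncard_image_of_injOn
      intro a ha a' ha' h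
      have h' : ({u, v, a} : Set V) = ({u, v, a'} : Set V) := h
      have hmem : a ∈ ({u, v, a'} : Set V) := h' ▸ (by simp : a ∈ ({u, v, a} : Set V))
      rcases hmem with rfl | rfl | h'
      · exact absurd rfl ha.1.ne'
      · exact absurd rfl ha.2.ne'
      · exact h'
    have hdisj : Disjoint I1 I2 := by
      rw [Set.disjoint_left]
      rintro s ⟨S, hS, rfl⟩ ⟨a, ha, htri0⟩
      have htri : ({u, v, a} : Set V) = Fcyc G he.ne S := htri0
      clear htri0
      have hu3 : u ∈ ({u, v, a} : Set V) := by simp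
      have hv3 : v ∈ ({u, v, a} : Set V) := by simp
      have hn3 : ({u, v, a} : Set V).ncard = 3 := by
        rw [Set.ncard_insert_of_notMem (by simp [he.ne, ha.1.ne] : u ∉ ({v, a} : Set V)),
          Set.ncard_insert_of_notMem (by simp [ha.2.ne] : v ∉ ({a} : Set V)),
          Set.ncard_singleton]
      revert htri
      unfold Fcyc
      split_ifs with h1 h2 h3
      · intro htri
        exact v_notMem_val_image S (htri ▸ hv3)
      · intro htri
        exact u_notMem_g1_image he.ne S (htri ▸ hu3)
      · intro htri
        have hS3 := cycle_three_le_ncard hS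
        have hSval : (Subtype.val '' S).ncard = S.ncard :=
          Set.ncard_image_of_injective S Subtype.val_injective
        have hfin : (Subtype.val '' S ∪ {v}).ncard = S.ncard + 1 := by
          rw [Set.union_singleton,
            Set.ncard_insert_of_notMem (v_notMem_val_image S), hSval]
        rw [← htri, hn3] at hfin
        omega
      · intro htri
        exact v_notMem_val_image S (htri ▸ hv3)
    have hle : (I1 ∪ I2).ncard ≤ G.inducedCycles.ncard :=
      Set.ncard_le_ncard hsub (Set.toFinite _)
    rw [Set.ncard_union_eq hdisj (Set.toFinite _) (Set.toFinite _), hcard1, hcard2] at hle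
    exact hle
  omega
end

section
/- If a connected simple graph G has fewer than C(n,3) induced cycles, then both the chromatic number χ(G) and the Hadwiger number h(G) are less than n. -/
open SimpleGraph

namespace SGAux
variable {V : Type*} {G : SimpleGraph V}
open SimpleGraph.Walk

/-- numeric cycle adjacency -/
def cadjP (m i j : ℕ) : Prop := (i + 1) % m = j ∨ (j + 1) % m = i

lemma cadjP_symm {m i j : ℕ} (h : cadjP m i j) : cadjP m j i := h.symm

lemma cadjP_iff {m i j : ℕ} (hm : 3 ≤ m) (hij : i < j) (hj : j < m) :
    cadjP m i j ↔ (j = i + 1 ∨ (i = 0 ∧ j = m - 1)) := by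
  unfold cadjP
  have hi1 : (i + 1) % m = i + 1 := Nat.mod_eq_of_lt (by omega)
  rcases Nat.lt_or_ge (j+1) m with h' | h'
  · rw [hi1, Nat.mod_eq_of_lt h']; omega
  · have : j + 1 = m := by omega
    rw [hi1, this, Nat.mod_self]; omega

lemma cycleGraph_adj_iff {m : ℕ} (hm : 3 ≤ m) (i j : Fin m) :
    (cycleGraph m).Adj i j ↔ cadjP m i.val j.val := by
  obtain ⟨m', rfl⟩ : ∃ m', m = m' + 2 := ⟨m - 2, by omega⟩
  rw [cycleGraph_adj]
  unfold cadjP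
  constructor
  · rintro (h | h)
    · right
      have : i = j + 1 := by rwa [sub_eq_iff_eq_add'] at h
      rw [this, Fin.val_add, Fin.val_one]
    · left
      have : j = i + 1 := by rwa [sub_eq_iff_eq_add'] at h
      rw [this, Fin.val_add, Fin.val_one]
  · rintro (h | h)
    · right
      rw [sub_eq_iff_eq_add']
      apply Fin.ext
      rw [Fin.val_add, Fin.val_one, h]
    · left
      rw [sub_eq_iff_eq_add']
      apply Fin.ext
      rw [Fin.val_add, Fin.val_one, h]

/-- From a suitable injection of `Fin m` we get an induced cycle. -/
lemma isInducedCycle_range {G : SimpleGraph V} {m : ℕ} (hm : 3 ≤ m) (f : Fin m → V)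
    (hinj : Function.Injective f)
    (hadj : ∀ i j, G.Adj (f i) (f j) ↔ cadjP m i.val j.val) :
    G.IsInducedCycle (Set.range f) := by
  refine ⟨m, hm, ⟨?_⟩⟩
  refine ⟨(Equiv.ofInjective f hinj).symm, ?_⟩
  intro a b
  rw [cycleGraph_adj_iff hm, ← hadj]
  have ha : f ((Equiv.ofInjective f hinj).symm a) = a := Equiv.apply_ofInjective_symm hinj a
  have hb : f ((Equiv.ofInjective f hinj).symm b) = b := Equiv.apply_ofInjective_symm hinj b
  rw [ha, hb]
  simp [induce]


open SimpleGraph.Walk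

lemma exists_split {x y : V} (p : G.Walk x y) (i : ℕ) (hi : i ≤ p.length) :
    ∃ (q : G.Walk x (p.getVert i)) (r : G.Walk (p.getVert i) y),
      q.length = i ∧ r.length = p.length - i ∧ ∀ j, r.getVert j = p.getVert (i + j) := by
  induction p generalizing i with
  | nil =>
    have : i = 0 := by simpa using hi
    subst this
    exact ⟨Walk.nil, Walk.nil, rfl, rfl, fun j => rfl⟩
  | @cons a b c h p' ih =>
    cases i with
    | zero =>
      refine ⟨Walk.nil, Walk.cons h p', rfl, by rfl, fun j => by rw [Nat.zero_add]; exact rfl⟩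
    | succ i =>
      obtain ⟨q', r', hq', hr', hg'⟩ := ih i (by simpa [Nat.succ_le_succ_iff] using hi)
      refine ⟨Walk.cons h q', r', by simp [hq'], by simp [hr'], fun j => ?_⟩
      exact (hg' j).trans (by rw [show i+1+j = (i+j)+1 from by omega, Walk.getVert_cons_succ])

lemma getVert_mem_support' {x y : V} (p : G.Walk x y) (i : ℕ) : p.getVert i ∈ p.support := by
  induction p generalizing i with
  | nil => simp [Walk.getVert]
  | cons h p' ih =>
    cases i with
    | zero => simp
    | succ i => simp only [Walk.getVert_cons_succ, Walk.support_cons, List.mem_cons]; right; exact ih i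

lemma IsPath.getVert_inj {x y : V} {p : G.Walk x y} (hp : p.IsPath) {i j : ℕ}
    (hi : i ≤ p.length) (hj : j ≤ p.length) (h : p.getVert i = p.getVert j) : i = j := by
  induction p generalizing i j with
  | nil => simp only [Walk.length_nil, Nat.le_zero] at hi hj; omega
  | @cons a b c hadj p' ih =>
    rw [Walk.cons_isPath_iff] at hp
    cases i with
    | zero =>
      cases j with
      | zero => rfl
      | succ j =>
        exfalso
        apply hp.2
        rw [Walk.getVert_zero, Walk.getVert_cons_succ] at h
        rw [h]
        exact getVert_mem_support' p' j
    | succ i =>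
      cases j with
      | zero =>
        exfalso
        apply hp.2
        rw [Walk.getVert_zero, Walk.getVert_cons_succ] at h
        rw [← h]
        exact getVert_mem_support' p' i
      | succ j =>
        have := ih hp.1 (by simpa [Nat.succ_le_succ_iff] using hi)
          (by simpa [Nat.succ_le_succ_iff] using hj)
          (by simpa [Walk.getVert_cons_succ] using h)
        omega

lemma mem_support_cases {x y : V} (p : G.Walk x y) :
    ∀ v ∈ p.support, v = x ∨ ∃ w, G.Adj w v := by
  induction p with
  | nil => intro v hv; left; simpa using hv
  | @cons a b c h p' ih =>
    intro v hv
    rw [Walk.support_cons, List.mem_cons] at hv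
    rcases hv with rfl | hv
    · left; rfl
    · rcases ih v hv with rfl | hw
      · exact Or.inr ⟨a, h⟩
      · exact Or.inr hw





lemma parity_contradiction {m : ℕ} (hm : 3 ≤ m) (hodd : Odd m) (g : Fin m → Prop)
    (hg : ∀ i j : Fin m, cadjP m i.val j.val → (g i ↔ ¬ g j)) : False := by
  have h0 : (0 : ℕ) < m := by omega
  have step : ∀ i : ℕ, ∀ h : i + 1 < m,
      (g ⟨i+1, h⟩ ↔ ¬ g ⟨i, by omega⟩) :=
    fun i h => hg ⟨i+1, h⟩ ⟨i, by omega⟩ (Or.inr (Nat.mod_eq_of_lt h))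
  have main : ∀ i, ∀ h : i < m,
      (Even i → (g ⟨i, h⟩ ↔ g ⟨0, h0⟩)) ∧ (¬ Even i → (g ⟨i, h⟩ ↔ ¬ g ⟨0, h0⟩)) := by
    intro i
    induction i with
    | zero => exact fun h => ⟨fun _ => Iff.rfl, fun he => absurd (by simp) he⟩
    | succ i ih =>
      intro h
      obtain ⟨ih1, ih2⟩ := ih (by omega)
      constructor
      · intro he
        have hi : ¬ Even i := by simpa [Nat.even_add_one] using he
        rw [step i h, ih2 hi, not_not]
      · intro he
        have hi : Even i := by simpa [Nat.even_add_one] using he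
        rw [step i h, ih1 hi]
  have hml : m - 1 < m := by omega
  have heven : Even (m - 1) := by
    rcases hodd with ⟨t, rfl⟩; simpa using ⟨t, by omega⟩
  have h1 : g ⟨m-1, hml⟩ ↔ g ⟨0, h0⟩ := (main (m-1) hml).1 heven
  have hwrap : cadjP m (0 : ℕ) (m - 1) := Or.inr (by rw [Nat.sub_add_cancel (by omega), Nat.mod_self])
  have h2 := hg ⟨0, h0⟩ ⟨m-1, hml⟩ hwrap
  rw [h1] at h2
  exact iff_not_self h2

lemma exists_two_coloring (H : SimpleGraph V)
    (h : ∀ (x : V) (w : H.Walk x x), ¬ Odd w.length) :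
    ∃ g : V → Prop, ∀ a b, H.Adj a b → (g a ↔ ¬ g b) := by
  classical
  have hpar : ∀ (r v : V) (w1 w2 : H.Walk r v), (Odd w1.length ↔ Odd w2.length) := by
    intro r v w1 w2
    have hcl := h r (w1.append w2.reverse)
    rw [SimpleGraph.Walk.length_append, SimpleGraph.Walk.length_reverse, Nat.odd_iff] at hcl
    rw [Nat.odd_iff, Nat.odd_iff]
    omega
  have hre : ∀ v : V, H.Reachable ((H.connectedComponentMk v).out) v := by
    intro v
    exact ConnectedComponent.eq.mp (Quot.out_eq _)
  refine ⟨fun v => Odd ((hre v).some.length), ?_⟩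
  intro a b hab
  have hcc : H.connectedComponentMk a = H.connectedComponentMk b :=
    ConnectedComponent.eq.mpr hab.reachable
  set r := (H.connectedComponentMk a).out with hr
  have hrb : (H.connectedComponentMk b).out = r := by rw [← hcc]
  -- parity relation
  have key : ∀ (w1 : H.Walk r a) (w2 : H.Walk ((H.connectedComponentMk b).out) b),
      (Odd w1.length ↔ ¬ Odd w2.length) := by
    intro w1 w2
    have hclosed := h r (w1.append (SimpleGraph.Walk.cons hab (w2.copy hrb rfl).reverse))
    rw [SimpleGraph.Walk.length_append, SimpleGraph.Walk.length_cons,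
      SimpleGraph.Walk.length_reverse, SimpleGraph.Walk.length_copy, Nat.odd_iff] at hclosed
    rw [Nat.odd_iff, Nat.odd_iff]
    omega
  exact key (hre a).some (hre b).some


lemma odd_induced_cycle_exists (G H : SimpleGraph V) (u : Set V)
    (h1 : ∀ a b, H.Adj a b → G.Adj a b ∧ a ∈ u ∧ b ∈ u)
    (h2 : ∀ a b, G.Adj a b → a ∈ u → b ∈ u → H.Adj a b)
    (x0 : V) (w0 : H.Walk x0 x0) (hodd0 : Odd w0.length) :
    ∃ (m : ℕ) (f : Fin m → V), 3 ≤ m ∧ Odd m ∧ Function.Injective f ∧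
      (∀ i j, G.Adj (f i) (f j) ↔ cadjP m i.val j.val) ∧ Set.range f ⊆ u := by
  classical
  set L := {ℓ : ℕ | Odd ℓ ∧ ∃ (y : V) (w : H.Walk y y), w.length = ℓ} with hLdef
  have hLne : L.Nonempty := ⟨w0.length, hodd0, x0, w0, rfl⟩
  obtain ⟨hℓodd, y, w, hw⟩ : sInf L ∈ L := Nat.sInf_mem hLne
  set ℓ := sInf L with hℓdef
  have hmin : ∀ (z : V) (w' : H.Walk z z), Odd w'.length → ℓ ≤ w'.length :=
    fun z w' ho => Nat.sInf_le ⟨ho, z, w', rfl⟩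
  have hl3 : 3 ≤ ℓ := by
    by_contra hcon
    have h1' : ℓ = 1 := by
      rcases hℓodd with ⟨t, ht⟩; omega
    have hadj01 : H.Adj (w.getVert 0) (w.getVert 1) := w.adj_getVert_succ (by omega)
    rw [Walk.getVert_zero, show (1:ℕ) = w.length from by omega, Walk.getVert_length] at hadj01
    exact G.irrefl (h1 _ _ hadj01).1
  have hu : ∀ k, w.getVert k ∈ u := by
    intro k
    rcases Nat.lt_or_ge k w.length with hk | hk
    · exact (h1 _ _ (w.adj_getVert_succ hk)).2.1
    · rw [w.getVert_of_length_le hk]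
      have := (h1 _ _ (w.adj_getVert_succ (show 0 < w.length by omega))).2.1
      rwa [Walk.getVert_zero] at this
  have hwrap : w.getVert ℓ = w.getVert 0 := by
    rw [Walk.getVert_zero, ← hw, Walk.getVert_length]
  -- no repeated vertices among positions < ℓ
  have hnodup : ∀ a b : ℕ, a < b → b < ℓ → w.getVert a ≠ w.getVert b := by
    intro a b hab hb heq
    obtain ⟨q, r, hq, hr, hgr⟩ := exists_split w a (by omega)
    obtain ⟨q2, r2, hq2, hr2, hgr2⟩ := exists_split r (b - a) (by omega)
    have hmid : r.getVert (b - a) = w.getVert a := by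
      rw [hgr, show a + (b - a) = b from by omega, ← heq]
    have hc1 := hmin _ (q2.copy rfl hmid)
    rw [Walk.length_copy, hq2] at hc1
    have hc2 := hmin _ (q.append (r2.copy hmid rfl))
    rw [Walk.length_append, Walk.length_copy, hq, hr2, hr] at hc2
    rw [Nat.odd_iff] at hc1 hc2 hℓodd
    omega
  have hchord : ∀ a b : ℕ, a < b → b < ℓ → G.Adj (w.getVert a) (w.getVert b) → cadjP ℓ a b := by
    intro a b hab hb hadj
    by_contra hnc
    rw [cadjP_iff hl3 hab hb] at hnc
    push_neg at hnc
    have hHadj : H.Adj (w.getVert a) (w.getVert b) := h2 _ _ hadj (hu a) (hu b)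
    obtain ⟨q, r, hq, hr, hgr⟩ := exists_split w a (by omega)
    obtain ⟨q2, r2, hq2, hr2, hgr2⟩ := exists_split r (b - a) (by omega)
    have hmid : r.getVert (b - a) = w.getVert b := by
      rw [hgr, show a + (b - a) = b from by omega]
    have hc1 := hmin _ ((q2.copy rfl hmid).concat hHadj.symm)
    rw [Walk.length_concat, Walk.length_copy, hq2] at hc1
    have hc2 := hmin _ (q.append (Walk.cons hHadj (r2.copy hmid rfl)))
    rw [Walk.length_append, Walk.length_cons, Walk.length_copy, hq, hr2, hr] at hc2
    rw [Nat.odd_iff] at hc1 hc2 hℓodd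
    omega
  refine ⟨ℓ, fun i => w.getVert i.val, hl3, hℓodd, ?_, ?_, ?_⟩
  · intro i j heq
    rcases lt_trichotomy i.val j.val with h | h | h
    · exact absurd heq (hnodup _ _ h j.isLt)
    · exact Fin.ext h
    · exact absurd heq.symm (hnodup _ _ h i.isLt)
  · intro i j
    constructor
    · intro hadj
      have hne : i.val ≠ j.val := by
        intro h
        have : (fun i : Fin ℓ => w.getVert i.val) i = (fun i : Fin ℓ => w.getVert i.val) j := by
          simp only [h]
        rw [this] at hadj
        exact G.irrefl hadj
      rcases Nat.lt_or_ge i.val j.val with h | h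
      · exact hchord _ _ h j.isLt hadj
      · exact cadjP_symm (hchord _ _ (by omega) i.isLt hadj.symm)
    · intro hc
      show G.Adj (w.getVert i.val) (w.getVert j.val)
      have hstep : ∀ a : ℕ, a < ℓ → G.Adj (w.getVert a) (w.getVert (a+1)) := by
        intro a ha
        exact (h1 _ _ (w.adj_getVert_succ (by omega))).1
      rcases hc with h | h
      · rcases Nat.lt_or_ge (i.val + 1) ℓ with h' | h'
        · rw [Nat.mod_eq_of_lt h'] at h
          rw [← h]
          exact hstep _ i.isLt
        · have hi : i.val + 1 = ℓ := by have := i.isLt; omega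
          have hj : j.val = 0 := by rw [← h, hi, Nat.mod_self]
          have := hstep i.val i.isLt
          rw [hi, hwrap, ← hj] at this
          exact this
      · rcases Nat.lt_or_ge (j.val + 1) ℓ with h' | h'
        · rw [Nat.mod_eq_of_lt h'] at h
          rw [← h]
          exact (hstep _ j.isLt).symm
        · have hj : j.val + 1 = ℓ := by have := j.isLt; omega
          have hi : i.val = 0 := by rw [← h, hj, Nat.mod_self]
          have := hstep j.val j.isLt
          rw [hj, hwrap, ← hi] at this
          exact this.symm
  · rintro _ ⟨i, rfl⟩
    exact hu i.val

lemma tri_induced_cycle (G : SimpleGraph V) (A B C : Set V)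
    (hAB : Disjoint A B) (hAC : Disjoint A C) (hBC : Disjoint B C)
    (hcA : (G.induce A).Connected) (hcB : (G.induce B).Connected) (hcC : (G.induce C).Connected)
    (eAB : ∃ a ∈ A, ∃ b ∈ B, G.Adj a b)
    (eAC : ∃ a ∈ A, ∃ c ∈ C, G.Adj a c)
    (eBC : ∃ b ∈ B, ∃ c ∈ C, G.Adj b c) :
    ∃ s : Set V, G.IsInducedCycle s ∧ s ⊆ A ∪ B ∪ C ∧
      (s ∩ A).Nonempty ∧ (s ∩ B).Nonempty ∧ (s ∩ C).Nonempty := by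
  classical
  set U := A ∪ B ∪ C with hUdef
  have hAU : A ⊆ U := fun v hv => Or.inl (Or.inl hv)
  have hBU : B ⊆ U := fun v hv => Or.inl (Or.inr hv)
  have hCU : C ⊆ U := fun v hv => Or.inr hv
  set H : SimpleGraph V := ⟨fun a b => G.Adj a b ∧ a ∈ U ∧ b ∈ U ∧ ¬(a ∈ B ∧ b ∈ C) ∧ ¬(a ∈ C ∧ b ∈ B),
    ⟨fun a b h => ⟨h.1.symm, h.2.2.1, h.2.1, fun hh => h.2.2.2.2 ⟨hh.2, hh.1⟩,
      fun hh => h.2.2.2.1 ⟨hh.2, hh.1⟩⟩⟩,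
    ⟨fun a h => G.irrefl h.1⟩⟩ with hHdef
  have hconv : ∀ (S : Set V), S ⊆ U → ((∀ v ∈ S, v ∉ C) ∨ (∀ v ∈ S, v ∉ B)) →
      ∀ (x y : {v // v ∈ S}) (p : (G.induce S).Walk x y), Nonempty (H.Walk x.val y.val) := by
    intro S hSU hS x y p
    induction p with
    | nil => exact ⟨SimpleGraph.Walk.nil⟩
    | @cons a b c hadj p ih =>
      refine ⟨SimpleGraph.Walk.cons ?_ ih.some⟩
      refine ⟨hadj, hSU a.2, hSU b.2, ?_, ?_⟩
      · rcases hS with hS | hS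
        · exact fun hh => hS b b.2 hh.2
        · exact fun hh => hS a a.2 hh.1
      · rcases hS with hS | hS
        · exact fun hh => hS a a.2 hh.1
        · exact fun hh => hS b b.2 hh.2
  have wInA : ∀ a a', a ∈ A → a' ∈ A → Nonempty (H.Walk a a') := fun a a' ha ha' =>
    hconv A hAU (Or.inl fun v hv => Set.disjoint_left.mp hAC hv) ⟨a, ha⟩ ⟨a', ha'⟩
      (hcA.preconnected ⟨a, ha⟩ ⟨a', ha'⟩).some
  have wInB : ∀ a a', a ∈ B → a' ∈ B → Nonempty (H.Walk a a') := fun a a' ha ha' =>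
    hconv B hBU (Or.inl fun v hv => Set.disjoint_left.mp hBC hv) ⟨a, ha⟩ ⟨a', ha'⟩
      (hcB.preconnected ⟨a, ha⟩ ⟨a', ha'⟩).some
  have wInC : ∀ a a', a ∈ C → a' ∈ C → Nonempty (H.Walk a a') := fun a a' ha ha' =>
    hconv C hCU (Or.inr fun v hv => Set.disjoint_right.mp hBC hv) ⟨a, ha⟩ ⟨a', ha'⟩
      (hcC.preconnected ⟨a, ha⟩ ⟨a', ha'⟩).some
  set L := {ℓ : ℕ | ∃ (x y : V), x ∈ B ∧ y ∈ C ∧ G.Adj x y ∧ ∃ p : H.Walk x y, p.length = ℓ}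
    with hLdef
  have hLne : L.Nonempty := by
    obtain ⟨b0, hb0, c0, hc0, hbc⟩ := eBC
    obtain ⟨a0, ha0, b1, hb1, hab⟩ := eAB
    obtain ⟨a1, ha1, c1, hc1, hac⟩ := eAC
    have e1 : H.Adj b1 a0 := ⟨hab.symm, hBU hb1, hAU ha0,
      fun hh => Set.disjoint_left.mp hAC ha0 hh.2,
      fun hh => Set.disjoint_left.mp hBC hb1 hh.1⟩
    have e2 : H.Adj a1 c1 := ⟨hac, hAU ha1, hCU hc1,
      fun hh => Set.disjoint_left.mp hAB ha1 hh.1,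
      fun hh => Set.disjoint_left.mp hAC ha1 hh.1⟩
    exact ⟨_, b0, c0, hb0, hc0, hbc,
      (wInB b0 b1 hb0 hb1).some.append (SimpleGraph.Walk.cons e1
        ((wInA a0 a1 ha0 ha1).some.append (SimpleGraph.Walk.cons e2
          (wInC c1 c0 hc1 hc0).some))), rfl⟩
  obtain ⟨x, y, hxB, hyC, hxy, p0, hp0⟩ : sInf L ∈ L := Nat.sInf_mem hLne
  set ℓ := sInf L with hℓdef
  have hmin : ∀ (x' y' : V), x' ∈ B → y' ∈ C → G.Adj x' y' → ∀ p' : H.Walk x' y',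
      ℓ ≤ p'.length := fun x' y' hx' hy' hxy' p' => Nat.sInf_le ⟨x', y', hx', hy', hxy', p', rfl⟩
  set p := p0.bypass with hpdef
  have hpPath : p.IsPath := SimpleGraph.Walk.bypass_isPath p0
  have hplen : p.length = ℓ :=
    le_antisymm (hp0 ▸ SimpleGraph.Walk.length_bypass_le p0) (hmin x y hxB hyC hxy p)
  have hl2 : 2 ≤ ℓ := by
    by_contra hcon
    push_neg at hcon
    interval_cases ℓ
    · have : x = y := p.eq_of_length_eq_zero hplen
      exact Set.disjoint_left.mp hBC hxB (this ▸ hyC)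
    · have hadj01 : H.Adj (p.getVert 0) (p.getVert 1) := p.adj_getVert_succ (by omega)
      rw [SimpleGraph.Walk.getVert_zero, show (1:ℕ) = p.length from by omega,
        SimpleGraph.Walk.getVert_length] at hadj01
      exact hadj01.2.2.2.1 ⟨hxB, hyC⟩
  have hgx : p.getVert 0 = x := SimpleGraph.Walk.getVert_zero p
  have hgy : p.getVert ℓ = y := by rw [← hplen, SimpleGraph.Walk.getVert_length]
  have hu : ∀ k, p.getVert k ∈ U := by
    intro k
    rcases mem_support_cases p _ (getVert_mem_support' p k) with h | ⟨w', hw'⟩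
    · rw [h]; exact hBU hxB
    · exact hw'.2.2.1
  have m3 : 3 ≤ ℓ + 1 := by omega
  -- chord analysis
  have hchord : ∀ a b : ℕ, a < b → b ≤ ℓ → G.Adj (p.getVert a) (p.getVert b) → cadjP (ℓ+1) a b := by
    intro a b hab hb hadj
    by_contra hnc
    rw [cadjP_iff m3 hab (by omega)] at hnc
    push_neg at hnc
    obtain ⟨hne1, hne2⟩ := hnc
    simp only [Nat.add_sub_cancel] at hne2
    obtain ⟨q, r, hq, hr, hgr⟩ := exists_split p a (by omega)
    obtain ⟨q', r', hq', hr', hgr'⟩ := exists_split p b (by omega)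
    by_cases hcross : (p.getVert a ∈ B ∧ p.getVert b ∈ C) ∨ (p.getVert a ∈ C ∧ p.getVert b ∈ B)
    · -- chord is a B-C edge : gives a shorter member of the family
      obtain ⟨q2, r2, hq2, hr2, hgr2⟩ := exists_split r (b - a) (by omega)
      have hmid : r.getVert (b - a) = p.getVert b := by
        rw [hgr, show a + (b - a) = b from by omega]
      have hblt : b - a < ℓ := by omega
      rcases hcross with ⟨h1', h2'⟩ | ⟨h1', h2'⟩
      · have := hmin _ _ h1' h2' hadj (q2.copy rfl hmid)
        rw [SimpleGraph.Walk.length_copy, hq2] at this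
        omega
      · have := hmin _ _ h2' h1' hadj.symm (q2.copy rfl hmid).reverse
        rw [SimpleGraph.Walk.length_reverse, SimpleGraph.Walk.length_copy, hq2] at this
        omega
    · -- chord is an H-edge : shortcut
      push_neg at hcross
      have hHadj : H.Adj (p.getVert a) (p.getVert b) := by
        refine ⟨hadj, hu a, hu b, ?_, ?_⟩
        · intro hh; exact hcross.1 hh.1 hh.2
        · intro hh; exact hcross.2 hh.1 hh.2
      have := hmin x y hxB hyC hxy ((q.copy rfl rfl).append
        (SimpleGraph.Walk.cons hHadj (r'.copy rfl rfl)))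
      rw [SimpleGraph.Walk.length_append, SimpleGraph.Walk.length_cons,
        SimpleGraph.Walk.length_copy, SimpleGraph.Walk.length_copy, hq, hr'] at this
      omega
  refine ⟨Set.range (fun i : Fin (ℓ+1) => p.getVert i.val), ?_, ?_, ?_, ?_, ?_⟩
  · refine isInducedCycle_range m3 _ ?_ ?_
    · intro i j heq
      exact Fin.ext (IsPath.getVert_inj hpPath (by omega) (by omega) heq)
    · intro i j
      constructor
      · intro hadj
        have hne : i.val ≠ j.val := by
          intro h
          have : p.getVert i.val = p.getVert j.val := by rw [h]
          rw [this] at hadj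
          exact G.irrefl hadj
        rcases Nat.lt_or_ge i.val j.val with h | h
        · exact hchord _ _ h (by omega) hadj
        · exact cadjP_symm (hchord _ _ (by omega) (by omega) hadj.symm)
      · intro hc
        show G.Adj (p.getVert i.val) (p.getVert j.val)
        have hstep : ∀ a : ℕ, a < ℓ → G.Adj (p.getVert a) (p.getVert (a+1)) := by
          intro a ha
          exact (p.adj_getVert_succ (by omega)).1
        rcases hc with h | h
        · rcases Nat.lt_or_ge (i.val + 1) (ℓ+1) with h' | h'
          · rw [Nat.mod_eq_of_lt h'] at h
            rw [← h]
            exact hstep _ (by omega)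
          · have hi : i.val = ℓ := by have := i.isLt; omega
            have hj : j.val = 0 := by rw [← h, show i.val + 1 = ℓ + 1 from by omega, Nat.mod_self]
            rw [hi, hj, hgx, hgy]
            exact hxy.symm
        · rcases Nat.lt_or_ge (j.val + 1) (ℓ+1) with h' | h'
          · rw [Nat.mod_eq_of_lt h'] at h
            rw [← h]
            exact (hstep _ (by omega)).symm
          · have hj : j.val = ℓ := by have := j.isLt; omega
            have hi : i.val = 0 := by rw [← h, show j.val + 1 = ℓ + 1 from by omega, Nat.mod_self]
            rw [hi, hj, hgx, hgy]
            exact hxy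
  · rintro _ ⟨i, rfl⟩
    exact hu i.val
  · -- meets A
    have hA : ∃ k, k ≤ ℓ ∧ p.getVert k ∈ A := by
      by_contra hno
      push_neg at hno
      have hQ : ∃ k, k ≤ ℓ ∧ p.getVert k ∉ B := ⟨ℓ, le_refl ℓ, by
        rw [hgy]; exact Set.disjoint_right.mp hBC hyC⟩
      obtain ⟨hk0l, hk0B⟩ := Nat.find_spec hQ
      have hk0pos : 0 < Nat.find hQ := by
        rcases Nat.eq_zero_or_pos (Nat.find hQ) with h | h
        · rw [h, hgx] at hk0B; exact absurd hxB hk0B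
        · exact h
      have hprev : p.getVert (Nat.find hQ - 1) ∈ B := by
        by_contra hpB
        exact Nat.find_min hQ (show Nat.find hQ - 1 < Nat.find hQ by omega) ⟨by omega, hpB⟩
      have hk0C : p.getVert (Nat.find hQ) ∈ C := by
        rcases hu (Nat.find hQ) with h | h
        · rcases h with h | h
          · exact absurd h (hno (Nat.find hQ) hk0l)
          · exact absurd h hk0B
        · exact h
      have hHadj : H.Adj (p.getVert (Nat.find hQ - 1)) (p.getVert (Nat.find hQ)) := by
        have := p.adj_getVert_succ (show Nat.find hQ - 1 < p.length by omega)
        rwa [show Nat.find hQ - 1 + 1 = Nat.find hQ from by omega] at this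
      exact hHadj.2.2.2.1 ⟨hprev, hk0C⟩
    obtain ⟨k, hkl, hkA⟩ := hA
    exact ⟨p.getVert k, ⟨⟨⟨k, by omega⟩, rfl⟩, hkA⟩⟩
  · exact ⟨x, ⟨⟨⟨0, by omega⟩, hgx⟩, hxB⟩⟩
  · exact ⟨y, ⟨⟨⟨ℓ, by omega⟩, hgy⟩, hyC⟩⟩

lemma count_le {V : Type*} [Fintype V] (G : SimpleGraph V) {k : ℕ}
    (F : Finset (Fin k) → Set V)
    (hmem : ∀ T : Finset (Fin k), T.card = 3 → F T ∈ G.inducedCycles)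
    (hinj : ∀ T1 T2 : Finset (Fin k), T1.card = 3 → T2.card = 3 → F T1 = F T2 → T1 = T2) :
    k.choose 3 ≤ G.inducedCycles.ncard := by
  classical
  have hfin : G.inducedCycles.Finite := Set.toFinite _
  have h1 : ((Finset.univ : Finset (Fin k)).powersetCard 3).card ≤ hfin.toFinset.card := by
    apply Finset.card_le_card_of_injOn F
    · intro T hT
      rw [Finset.mem_coe, Set.Finite.mem_toFinset]
      exact hmem T (Finset.mem_powersetCard.mp (Finset.mem_coe.mp hT)).2
    · intro T1 hT1 T2 hT2 he
      exact hinj T1 T2 (Finset.mem_powersetCard.mp (Finset.mem_coe.mp hT1)).2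
        (Finset.mem_powersetCard.mp (Finset.mem_coe.mp hT2)).2 he
  rwa [Finset.card_powersetCard, Finset.card_univ, Fintype.card_fin,
    ← Set.ncard_eq_toFinset_card _ hfin] at h1

end SGAux

theorem stmt19 {V : Type*} [Fintype V] (G : SimpleGraph V) (hconn : G.Connected)
    (n : ℕ) (hC : G.inducedCycles.ncard < n.choose 3) :
    G.chromaticNumber < (n : ℕ∞) ∧ G.hadwigerNumber < n := by
  classical
  have hn3 : 3 ≤ n := by
    by_contra h
    push_neg at h
    rw [Nat.choose_eq_zero_of_lt (by omega)] at hC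
    omega
  constructor
  · -- chromatic number part
    by_contra hlt
    push_neg at hlt
    have hSne : {m | G.Colorable m}.Nonempty := ⟨Fintype.card V, G.colorable_of_fintype⟩
    have hkc : G.Colorable (sInf {m | G.Colorable m}) := Nat.sInf_mem hSne
    set k := sInf {m | G.Colorable m} with hkdef
    have hnk : n ≤ k := by
      have h1 : (n : ℕ∞) ≤ (k : ℕ∞) := le_trans hlt hkc.chromaticNumber_le
      exact_mod_cast h1
    obtain ⟨col⟩ := hkc
    have key : ∀ T : Finset (Fin k), ∃ s : Set V, T.card = 3 →
        s ∈ G.inducedCycles ∧ (∀ v ∈ s, col v ∈ T) ∧ (∀ c ∈ T, ∃ v ∈ s, col v = c) := by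
      intro T
      by_cases hT3 : T.card = 3
      swap
      · exact ⟨∅, fun h => absurd h hT3⟩
      obtain ⟨c1, c2, c3, h12, h13, h23, rfl⟩ := Finset.card_eq_three.mp hT3
      set u : Set V := {v | col v ∈ ({c1, c2, c3} : Finset (Fin k))} with hudef
      set H : SimpleGraph V := ⟨fun a b => G.Adj a b ∧ a ∈ u ∧ b ∈ u,
        ⟨fun a b h => ⟨h.1.symm, h.2.2, h.2.1⟩⟩, ⟨fun a h => G.irrefl h.1⟩⟩ with hHdef
      have h1H : ∀ a b, H.Adj a b → G.Adj a b ∧ a ∈ u ∧ b ∈ u := fun a b h => h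
      have h2H : ∀ a b, G.Adj a b → a ∈ u → b ∈ u → H.Adj a b := fun a b h ha hb => ⟨h, ha, hb⟩
      by_cases hodd : ∃ (x : V) (w : H.Walk x x), Odd w.length
      · obtain ⟨x0, w0, hw0⟩ := hodd
        obtain ⟨m, f, hm3, hmodd, hfinj, hfadj, hfu⟩ :=
          SGAux.odd_induced_cycle_exists G H u h1H h2H x0 w0 hw0
        refine ⟨Set.range f, fun _ => ⟨SGAux.isInducedCycle_range hm3 f hfinj hfadj, ?_, ?_⟩⟩
        · rintro v hv
          exact hfu hv
        · intro c hc
          by_contra hnc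
          push_neg at hnc
          have hmemT : ∀ v ∈ Set.range f, col v = c1 ∨ col v = c2 ∨ col v = c3 := by
            intro v hv
            have : col v ∈ ({c1, c2, c3} : Finset (Fin k)) := hfu hv
            simpa using this
          obtain ⟨d1, d2, hd12, hdmem⟩ : ∃ d1 d2 : Fin k, d1 ≠ d2 ∧
              ∀ v ∈ Set.range f, col v = d1 ∨ col v = d2 := by
            simp only [Finset.mem_insert, Finset.mem_singleton] at hc
            rcases hc with rfl | rfl | rfl
            · exact ⟨c2, c3, h23, fun v hv => by
                rcases hmemT v hv with h | h | h
                · exact absurd h (hnc v hv)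
                · exact Or.inl h
                · exact Or.inr h⟩
            · exact ⟨c1, c3, h13, fun v hv => by
                rcases hmemT v hv with h | h | h
                · exact Or.inl h
                · exact absurd h (hnc v hv)
                · exact Or.inr h⟩
            · exact ⟨c1, c2, h12, fun v hv => by
                rcases hmemT v hv with h | h | h
                · exact Or.inl h
                · exact Or.inr h
                · exact absurd h (hnc v hv)⟩
          refine SGAux.parity_contradiction hm3 hmodd (fun i => col (f i) = d1) ?_
          intro i j hcadj
          have hGadj : G.Adj (f i) (f j) := (hfadj i j).mpr hcadj
          have hvne := col.valid hGadj
          have hci := hdmem (f i) ⟨i, rfl⟩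
          have hcj := hdmem (f j) ⟨j, rfl⟩
          constructor
          · intro hI hJ
            exact hvne (hI.trans hJ.symm)
          · intro hnJ
            rcases hcj with hcj | hcj
            · exact absurd hcj hnJ
            · rcases hci with hci | hci
              · exact hci
              · exact absurd (hci.trans hcj.symm) hvne
      · push_neg at hodd
        exfalso
        obtain ⟨g, hg⟩ := SGAux.exists_two_coloring H (fun x w => hodd x w)
        set col' : V → Fin k := fun v =>
          if col v ∈ ({c1, c2, c3} : Finset (Fin k)) then (if g v then c1 else c2) else col v
          with hcol'def
        have hproper : ∀ a b, G.Adj a b → col' a ≠ col' b := by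
          intro a b hab
          by_cases haT : col a ∈ ({c1, c2, c3} : Finset (Fin k)) <;>
            by_cases hbT : col b ∈ ({c1, c2, c3} : Finset (Fin k))
          · have hHab : H.Adj a b := ⟨hab, haT, hbT⟩
            have hgab := hg a b hHab
            simp only [hcol'def, if_pos haT, if_pos hbT]
            by_cases hga : g a
            · rw [if_pos hga, if_neg (by tauto)]
              exact h12
            · rw [if_neg hga, if_pos (by tauto)]
              exact fun h => h12 h.symm
          · simp only [hcol'def, if_pos haT, if_neg hbT]
            intro heq
            apply hbT
            by_cases hga : g a
            · rw [if_pos hga] at heq; rw [← heq]; simp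
            · rw [if_neg hga] at heq; rw [← heq]; simp
          · simp only [hcol'def, if_neg haT, if_pos hbT]
            intro heq
            apply haT
            by_cases hgb : g b
            · rw [if_pos hgb] at heq; rw [heq]; simp
            · rw [if_neg hgb] at heq; rw [heq]; simp
          · simp only [hcol'def, if_neg haT, if_neg hbT]
            exact col.valid hab
        have havoid : ∀ v, col' v ≠ c3 := by
          intro v
          simp only [hcol'def]
          by_cases h : col v ∈ ({c1, c2, c3} : Finset (Fin k))
          · rw [if_pos h]
            by_cases hgv : g v
            · rw [if_pos hgv]; exact h13
            · rw [if_neg hgv]; exact h23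
          · rw [if_neg h]
            intro heq
            apply h
            rw [heq]
            simp
        have hcolorable : G.Colorable (k - 1) := by
          have C2 : G.Coloring {x : Fin k // x ≠ c3} :=
            SimpleGraph.Coloring.mk (fun v => ⟨col' v, havoid v⟩)
              (fun {a b} hab heq => hproper a b hab (congrArg Subtype.val heq))
          have hcard : Fintype.card {x : Fin k // x ≠ c3} = k - 1 := by
            have hcc := Fintype.card_subtype_compl (fun x : Fin k => x = c3)
            rw [Fintype.card_subtype_eq, Fintype.card_fin] at hcc
            exact hcc
          have := C2.colorable
          rwa [hcard] at this
        have hk1 : k ≤ k - 1 := Nat.sInf_le hcolorable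
        omega
    choose F hF using key
    have hcount := SGAux.count_le G F (fun T hT => (hF T hT).1) ?_
    · have hmono : n.choose 3 ≤ k.choose 3 := Nat.choose_le_choose 3 hnk
      omega
    · intro T1 T2 hT1 hT2 he
      have hsub : ∀ (T1 T2 : Finset (Fin k)) (h1 : T1.card = 3) (h2 : T2.card = 3),
          F T1 = F T2 → T1 ⊆ T2 := by
        intro T1 T2 h1 h2 he i hi
        obtain ⟨v, hv, hcv⟩ := (hF T1 h1).2.2 i hi
        rw [he] at hv
        have := (hF T2 h2).2.1 v hv
        rwa [← hcv]
      exact le_antisymm (hsub T1 T2 hT1 hT2 he) (hsub T2 T1 hT2 hT1 he.symm)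
  · -- Hadwiger part
    by_contra hlt
    push_neg at hlt
    have h0S : 0 ∈ {t : ℕ | G.IsMinor (⊤ : SimpleGraph (Fin t))} :=
      ⟨fun i => i.elim0, fun i => i.elim0, fun i => i.elim0, fun i j h => i.elim0,
        fun i j h => i.elim0⟩
    have hbdd : BddAbove {t : ℕ | G.IsMinor (⊤ : SimpleGraph (Fin t))} := by
      refine ⟨Fintype.card V, fun t ht => ?_⟩
      obtain ⟨f, hne, hcon, hdisj, hadj⟩ := ht
      have hginj : Function.Injective (fun w : Fin t => (hne w).some) := by
        intro w w' he
        by_contra hne'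
        have h3 : (hne w).some = (hne w').some := he
        have h2 : (hne w).some ∈ f w' := by rw [h3]; exact (hne w').some_mem
        exact Set.disjoint_left.mp (hdisj w w' hne') (hne w).some_mem h2
      simpa using Fintype.card_le_of_injective _ hginj
    have htS : sSup {t : ℕ | G.IsMinor (⊤ : SimpleGraph (Fin t))} ∈
        {t : ℕ | G.IsMinor (⊤ : SimpleGraph (Fin t))} := Nat.sSup_mem ⟨0, h0S⟩ hbdd
    set t := sSup {t : ℕ | G.IsMinor (⊤ : SimpleGraph (Fin t))} with htdef
    have hnt : n ≤ t := hlt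
    obtain ⟨f, hne, hcon, hdisj, hadj⟩ := htS
    have key : ∀ T : Finset (Fin t), ∃ s : Set V, T.card = 3 →
        s ∈ G.inducedCycles ∧ (∀ v ∈ s, ∃ i ∈ T, v ∈ f i) ∧ (∀ i ∈ T, ∃ v ∈ s, v ∈ f i) := by
      intro T
      by_cases hT3 : T.card = 3
      swap
      · exact ⟨∅, fun h => absurd h hT3⟩
      obtain ⟨a, b, c, hab, hac, hbc, rfl⟩ := Finset.card_eq_three.mp hT3
      obtain ⟨s, hcyc, hsub, hA, hB, hC'⟩ := SGAux.tri_induced_cycle G (f a) (f b) (f c)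
        (hdisj a b hab) (hdisj a c hac) (hdisj b c hbc) (hcon a) (hcon b) (hcon c)
        (hadj a b (by simp [hab])) (hadj a c (by simp [hac])) (hadj b c (by simp [hbc]))
      refine ⟨s, fun _ => ⟨hcyc, ?_, ?_⟩⟩
      · intro v hv
        rcases hsub hv with (h | h) | h
        · exact ⟨a, by simp, h⟩
        · exact ⟨b, by simp, h⟩
        · exact ⟨c, by simp, h⟩
      · intro i hi
        simp only [Finset.mem_insert, Finset.mem_singleton] at hi
        rcases hi with rfl | rfl | rfl
        · obtain ⟨v, hv⟩ := hA
          exact ⟨v, hv.1, hv.2⟩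
        · obtain ⟨v, hv⟩ := hB
          exact ⟨v, hv.1, hv.2⟩
        · obtain ⟨v, hv⟩ := hC'
          exact ⟨v, hv.1, hv.2⟩
    choose F hF using key
    have hcount := SGAux.count_le G F (fun T hT => (hF T hT).1) ?_
    · have hmono : n.choose 3 ≤ t.choose 3 := Nat.choose_le_choose 3 hnt
      omega
    · intro T1 T2 hT1 hT2 he
      have hsub : ∀ (T1 T2 : Finset (Fin t)) (h1 : T1.card = 3) (h2 : T2.card = 3),
          F T1 = F T2 → T1 ⊆ T2 := by
        intro T1 T2 h1 h2 he i hi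
        obtain ⟨v, hv, hvi⟩ := (hF T1 h1).2.2 i hi
        rw [he] at hv
        obtain ⟨j, hj, hvj⟩ := (hF T2 h2).2.1 v hv
        have hij : i = j := by
          by_contra hij
          exact Set.disjoint_left.mp (hdisj i j hij) hvi hvj
        rwa [hij]
      exact le_antisymm (hsub T1 T2 hT1 hT2 he) (hsub T2 T1 hT2 hT1 he.symm)
end
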